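/- arXiv:1504.03623 — 4 statements merged into one kernel-verified Lean document; each statement's English description precedes it below -/
import Mathlib

section
/- Let 𝓕 be an indexed family. If there exist sets A, B ∈ 𝓕 with A ≠ B and A ∩ B ≠ ∅, then 𝓕 is not PRT-learnable. -/
/-!
Common framework: indexed families of c.e. sets, enumerations (texts),
learning machines with run-time, membership-oracle machines, teachers,
and the learning criteria PRT/PSD/PMC/PCS with oracle/teacher variants.
-/

namespace TeachLearn

attribute [local instance] Classical.propDecidable

/-- The initial segment (finite string) of length `n` of the infinite sequence `f`. -/
def str (f : ℕ → ℕ) (n : ℕ) : List ℕ := (List.range n).map f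

/-- `f` is an enumeration (a text) of the set `A`: its set of values is exactly `A`. -/
def IsEnum (f : ℕ → ℕ) (A : Set ℕ) : Prop := Set.range f = A

/-- An indexed family: a uniformly computably enumerable sequence of nonempty
subsets of `ℕ`. -/
structure IndexedFamily where
  F : ℕ → Set ℕ
  nonempty : ∀ n, (F n).Nonempty
  uce : REPred fun p : ℕ × ℕ => p.1 ∈ F p.2

namespace IndexedFamily

/-- `A` is a member of the indexed family `𝓕`. -/
def Mem (𝓕 : IndexedFamily) (A : Set ℕ) : Prop := ∃ n, 𝓕.F n = A

/-- The minimal index of `A` in the indexed family `𝓕`. -/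
noncomputable def mi (𝓕 : IndexedFamily) (A : Set ℕ) : ℕ := sInf {n | 𝓕.F n = A}

end IndexedFamily

/-- A learning machine: a partial computable map from finite strings to
hypotheses, together with a (cumulative) run-time function.  The run-time is
defined exactly when the machine halts, dominates the length of the input read
as well as the size of the output produced, and is monotone along prefixes
(time is accumulated while reading an enumeration). -/
structure Machine where
  eval : List ℕ →. ℕ
  partrec : Partrec eval
  time : List ℕ →. ℕ
  time_dom : ∀ σ, (time σ).Dom ↔ (eval σ).Dom
  length_le_time : ∀ ⦃σ t⦄, t ∈ time σ → σ.length ≤ t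
  size_le_time : ∀ ⦃σ t h⦄, t ∈ time σ → h ∈ eval σ → Nat.size h ≤ t
  time_mono : ∀ ⦃σ τ s t⦄, σ <+: τ → s ∈ time σ → t ∈ time τ → s ≤ t

/-- A teacher: a computable, prefix-monotone map on finite strings whose
output consists of elements of its input. -/
structure Teacher where
  t : List ℕ → List ℕ
  computable : Computable t
  mono : ∀ ⦃σ τ⦄, σ <+: τ → t σ <+: t τ
  content_sub : ∀ ⦃σ x⦄, x ∈ t σ → x ∈ σ

/-- A learning machine with access to a membership oracle, modeled
interactively: `step (σ, ans)` is the machine's action on input string `σ`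
after having received the list `ans` of oracle answers so far; an even value
`2 * q` asks the oracle whether `q` belongs to the target, while an odd value
`2 * h + 1` halts the interaction with hypothesis `h`.  The run-time dominates
the length of the input read, the number of oracle queries asked, and the size
of the value produced, and is monotone (cumulative). -/
structure OMachine where
  step : List ℕ × List Bool →. ℕ
  partrec : Partrec step
  time : List ℕ × List Bool →. ℕ
  time_dom : ∀ x, (time x).Dom ↔ (step x).Dom
  length_le_time : ∀ ⦃x t⦄, t ∈ time x → x.1.length ≤ t
  queries_le_time : ∀ ⦃x t⦄, t ∈ time x → x.2.length ≤ t
  size_le_time : ∀ ⦃x t v⦄, t ∈ time x → v ∈ step x → Nat.size v ≤ t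
  time_mono : ∀ ⦃σ τ a b s t⦄, σ <+: τ → a <+: b →
    s ∈ time (σ, a) → t ∈ time (τ, b) → s ≤ t

namespace OMachine

/-- The answer lists reachable in the interaction of the machine `M` with the
membership oracle for `A` on the input string `σ`. -/
inductive Reach (M : OMachine) (A : Set ℕ) (σ : List ℕ) : List Bool → Prop
  | nil : Reach M A σ []
  | query {ans q} : Reach M A σ ans → (2 * q) ∈ M.step (σ, ans) →
      Reach M A σ (ans ++ [decide (q ∈ A)])

/-- `M.Out A σ h ans`: on input `σ`, interacting with the membership oracle
for `A`, the machine `M` receives the oracle answers `ans` and halts with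
hypothesis `h`. -/
def Out (M : OMachine) (A : Set ℕ) (σ : List ℕ) (h : ℕ) (ans : List Bool) : Prop :=
  M.Reach A σ ans ∧ (2 * h + 1) ∈ M.step (σ, ans)

/-- With oracle `A`, on the stage inputs `I`, the machine `M` outputs the
hypothesis `h` from stage `n` onwards. -/
def Settles (M : OMachine) (A : Set ℕ) (I : ℕ → List ℕ) (h n : ℕ) : Prop :=
  ∀ m, n ≤ m → ∃ ans, M.Out A (I m) h ans

end OMachine

/-- A teacher for the teacher-and-oracle model: it additionally has access to
the oracle answers received so far by the learner. -/
structure OTeacher where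
  t : List ℕ → List Bool → List ℕ
  computable : Computable₂ t
  mono : ∀ ⦃σ τ a b⦄, σ <+: τ → a <+: b → t σ a <+: t τ b
  content_sub : ∀ ⦃σ a x⦄, x ∈ t σ a → x ∈ σ

/-- On the stage inputs `I`, the machine `M` outputs the hypothesis `h` from
stage `n` onwards. -/
def Machine.Settles (M : Machine) (I : ℕ → List ℕ) (h n : ℕ) : Prop :=
  ∀ m, n ≤ m → M.eval (I m) = Part.some h

/-- Settling for the teacher-and-oracle model: `hist m` records the oracle
answers the learner received at stage `m - 1`, which the teacher sees at
stage `m`.  From stage `n` on, the learner outputs `h`. -/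
def OMachine.TOSettles (M : OMachine) (T : OTeacher) (A : Set ℕ) (f : ℕ → ℕ)
    (hist : ℕ → List Bool) (h n : ℕ) : Prop :=
  ∀ m, n ≤ m → M.Out A (T.t (str f m) (hist m)) h (hist (m + 1))

/-! ### Polynomial run-time (PRT) -/

/-- `M` converges to the hypothesis `h` on the stage inputs `I` within fewer
than `B` computation steps. -/
def Machine.PRTIdentifies (M : Machine) (I : ℕ → List ℕ) (h B : ℕ) : Prop :=
  ∃ n, M.Settles I h n ∧ ∃ t, t ∈ M.time (I n) ∧ t < B

/-- Oracle version of `Machine.PRTIdentifies`; the run-time bound also bounds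
the oracle use (by `queries_le_time`). -/
def OMachine.PRTIdentifies (M : OMachine) (A : Set ℕ) (I : ℕ → List ℕ) (h B : ℕ) : Prop :=
  ∃ n, M.Settles A I h n ∧
    ∃ ans t, M.Out A (I n) h ans ∧ t ∈ M.time (I n, ans) ∧ t < B

/-- `M` PRT-learns `𝓕` with polynomial bound `p`. -/
def PRTLearnsWith (M : Machine) (p : Polynomial ℕ) (𝓕 : IndexedFamily) : Prop :=
  ∀ A, 𝓕.Mem A → ∀ f, IsEnum f A →
    ∃ h, 𝓕.F h = A ∧ M.PRTIdentifies (str f) h (p.eval (𝓕.mi A))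

/-- `𝓕` is PRT-learnable. -/
def PRT (𝓕 : IndexedFamily) : Prop := ∃ M p, PRTLearnsWith M p 𝓕

/-- The learner-teacher pair `(M, T)` PRT-learns `𝓕` with polynomial bound `p`. -/
def PRTTLearnsWith (M : Machine) (T : Teacher) (p : Polynomial ℕ) (𝓕 : IndexedFamily) : Prop :=
  ∀ A, 𝓕.Mem A → ∀ f, IsEnum f A →
    ∃ h, 𝓕.F h = A ∧ M.PRTIdentifies (fun m => T.t (str f m)) h (p.eval (𝓕.mi A))

/-- `𝓕` is PRT[T]-learnable. -/
def PRTT (𝓕 : IndexedFamily) : Prop := ∃ M T p, PRTTLearnsWith M T p 𝓕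

/-- `𝓕` is PRT[O]-learnable. -/
def PRTO (𝓕 : IndexedFamily) : Prop :=
  ∃ (M : OMachine) (p : Polynomial ℕ), ∀ A, 𝓕.Mem A → ∀ f, IsEnum f A →
    ∃ h, 𝓕.F h = A ∧ M.PRTIdentifies A (str f) h (p.eval (𝓕.mi A))

/-- `𝓕` is PRT[T,O]-learnable. -/
def PRTTO (𝓕 : IndexedFamily) : Prop :=
  ∃ (M : OMachine) (T : OTeacher) (p : Polynomial ℕ),
    ∀ A, 𝓕.Mem A → ∀ f, IsEnum f A →
      ∃ h, 𝓕.F h = A ∧ ∃ hist : ℕ → List Bool, hist 0 = [] ∧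
        ∃ n, M.TOSettles T A f hist h n ∧
          ∃ t, t ∈ M.time (T.t (str f n) (hist n), hist (n + 1)) ∧ t < p.eval (𝓕.mi A)

/-! ### Polynomial size dataset (PSD) -/

/-- `M` converges to `h` on an initial stage whose input contains fewer than
`B` distinct elements. -/
def Machine.PSDIdentifies (M : Machine) (I : ℕ → List ℕ) (h B : ℕ) : Prop :=
  ∃ n, M.Settles I h n ∧ (I n).toFinset.card < B

/-- Oracle version of `Machine.PSDIdentifies`; the oracle use is also bounded. -/
def OMachine.PSDIdentifies (M : OMachine) (A : Set ℕ) (I : ℕ → List ℕ) (h B : ℕ) : Prop :=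
  ∃ n, M.Settles A I h n ∧ (I n).toFinset.card < B ∧
    ∃ ans, M.Out A (I n) h ans ∧ ans.length ≤ B

/-- `𝓕` is PSD-learnable. -/
def PSD (𝓕 : IndexedFamily) : Prop :=
  ∃ (M : Machine) (p : Polynomial ℕ), ∀ A, 𝓕.Mem A → ∀ f, IsEnum f A →
    ∃ h, 𝓕.F h = A ∧ M.PSDIdentifies (str f) h (p.eval (𝓕.mi A))

/-- `𝓕` is PSD[T]-learnable. -/
def PSDT (𝓕 : IndexedFamily) : Prop :=
  ∃ (M : Machine) (T : Teacher) (p : Polynomial ℕ), ∀ A, 𝓕.Mem A → ∀ f, IsEnum f A →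
    ∃ h, 𝓕.F h = A ∧ M.PSDIdentifies (fun m => T.t (str f m)) h (p.eval (𝓕.mi A))

/-- `𝓕` is PSD[O]-learnable. -/
def PSDO (𝓕 : IndexedFamily) : Prop :=
  ∃ (M : OMachine) (p : Polynomial ℕ), ∀ A, 𝓕.Mem A → ∀ f, IsEnum f A →
    ∃ h, 𝓕.F h = A ∧ M.PSDIdentifies A (str f) h (p.eval (𝓕.mi A))

/-- `𝓕` is PSD[T,O]-learnable. -/
def PSDTO (𝓕 : IndexedFamily) : Prop :=
  ∃ (M : OMachine) (T : OTeacher) (p : Polynomial ℕ),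
    ∀ A, 𝓕.Mem A → ∀ f, IsEnum f A →
      ∃ h, 𝓕.F h = A ∧ ∃ hist : ℕ → List Bool, hist 0 = [] ∧
        ∃ n, M.TOSettles T A f hist h n ∧
          (T.t (str f n) (hist n)).toFinset.card < p.eval (𝓕.mi A) ∧
          (hist (n + 1)).length ≤ p.eval (𝓕.mi A)

/-! ### Polynomial mind-changes (PMC) -/

/-- The set of positions at which the hypothesis stream `g` changes its mind. -/
def MindChanges (g : ℕ → ℕ) : Set ℕ := {i | g i ≠ g (i + 1)}

/-- The hypothesis stream `g` changes its mind at most `B` times, and the only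
hypothesis appearing infinitely often in it is an index of `A` in `𝓕`. -/
def PMCCriterion (𝓕 : IndexedFamily) (A : Set ℕ) (g : ℕ → ℕ) (B : ℕ) : Prop :=
  (MindChanges g).Finite ∧ (MindChanges g).ncard ≤ B ∧
    ∀ h, {i | g i = h}.Infinite → 𝓕.F h = A

/-- `𝓕` is PMC-learnable. -/
def PMC (𝓕 : IndexedFamily) : Prop :=
  ∃ (M : Machine) (p : Polynomial ℕ), ∀ A, 𝓕.Mem A → ∀ f, IsEnum f A →
    ∃ g : ℕ → ℕ, (∀ m, M.eval (str f m) = Part.some (g m)) ∧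
      PMCCriterion 𝓕 A g (p.eval (𝓕.mi A))

/-- `𝓕` is PMC[T]-learnable. -/
def PMCT (𝓕 : IndexedFamily) : Prop :=
  ∃ (M : Machine) (T : Teacher) (p : Polynomial ℕ), ∀ A, 𝓕.Mem A → ∀ f, IsEnum f A →
    ∃ g : ℕ → ℕ, (∀ m, M.eval (T.t (str f m)) = Part.some (g m)) ∧
      PMCCriterion 𝓕 A g (p.eval (𝓕.mi A))

/-- `𝓕` is PMC[O]-learnable. -/
def PMCO (𝓕 : IndexedFamily) : Prop :=
  ∃ (M : OMachine) (p : Polynomial ℕ), ∀ A, 𝓕.Mem A → ∀ f, IsEnum f A →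
    ∃ g : ℕ → ℕ,
      (∀ m, ∃ ans, M.Out A (str f m) (g m) ans ∧ ans.length ≤ p.eval (𝓕.mi A)) ∧
      PMCCriterion 𝓕 A g (p.eval (𝓕.mi A))

/-- `𝓕` is PMC[T,O]-learnable. -/
def PMCTO (𝓕 : IndexedFamily) : Prop :=
  ∃ (M : OMachine) (T : OTeacher) (p : Polynomial ℕ),
    ∀ A, 𝓕.Mem A → ∀ f, IsEnum f A →
      ∃ hist : ℕ → List Bool, hist 0 = [] ∧
        ∃ g : ℕ → ℕ,
          (∀ m, M.Out A (T.t (str f m) (hist m)) (g m) (hist (m + 1)) ∧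
            (hist (m + 1)).length ≤ p.eval (𝓕.mi A)) ∧
          PMCCriterion 𝓕 A g (p.eval (𝓕.mi A))

/-! ### Polynomial size characteristic sample (PCS) -/

/-- `𝓕` is PCS-learnable: there are a machine, a polynomial bound and an
assignment of a characteristic sample to each member of `𝓕`. -/
def PCS (𝓕 : IndexedFamily) : Prop :=
  ∃ (M : Machine) (p : Polynomial ℕ) (S : Set ℕ → Finset ℕ),
    ∀ A, 𝓕.Mem A → ↑(S A) ⊆ A ∧ (S A).card < p.eval (𝓕.mi A) ∧
      ∃ e, 𝓕.F e = A ∧ ∀ f, IsEnum f A → ∀ n, (∀ x ∈ S A, x ∈ str f n) →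
        M.eval (str f n) = Part.some e

/-- `𝓕` is PCS[O]-learnable. -/
def PCSO (𝓕 : IndexedFamily) : Prop :=
  ∃ (M : OMachine) (p : Polynomial ℕ) (S : Set ℕ → Finset ℕ),
    ∀ A, 𝓕.Mem A → ↑(S A) ⊆ A ∧ (S A).card < p.eval (𝓕.mi A) ∧
      ∃ e, 𝓕.F e = A ∧ ∀ f, IsEnum f A → ∀ n, (∀ x ∈ S A, x ∈ str f n) →
        ∃ ans, M.Out A (str f n) e ans ∧ ans.length ≤ p.eval (𝓕.mi A)

/-- `𝓕` is PCS[T]-learnable: the characteristic sample must eventually appear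
in the teacher's output stream, after which the learner locks onto a correct
index. -/
def PCST (𝓕 : IndexedFamily) : Prop :=
  ∃ (M : Machine) (T : Teacher) (p : Polynomial ℕ) (S : Set ℕ → Finset ℕ),
    ∀ A, 𝓕.Mem A → ↑(S A) ⊆ A ∧ (S A).card < p.eval (𝓕.mi A) ∧
      ∃ e, 𝓕.F e = A ∧ ∀ f, IsEnum f A →
        (∃ n, ∀ x ∈ S A, x ∈ T.t (str f n)) ∧
        ∀ n, (∀ x ∈ S A, x ∈ T.t (str f n)) → M.eval (T.t (str f n)) = Part.some e

/-- `𝓕` is PCS[T,O]-learnable. -/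
def PCSTO (𝓕 : IndexedFamily) : Prop :=
  ∃ (M : OMachine) (T : OTeacher) (p : Polynomial ℕ) (S : Set ℕ → Finset ℕ),
    ∀ A, 𝓕.Mem A → ↑(S A) ⊆ A ∧ (S A).card < p.eval (𝓕.mi A) ∧
      ∃ e, 𝓕.F e = A ∧ ∀ f, IsEnum f A →
        ∃ hist : ℕ → List Bool, hist 0 = [] ∧
          (∃ n, ∀ x ∈ S A, x ∈ T.t (str f n) (hist n)) ∧
          ∀ n, (∀ x ∈ S A, x ∈ T.t (str f n) (hist n)) →
            M.Out A (T.t (str f n) (hist n)) e (hist (n + 1)) ∧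
            (hist (n + 1)).length ≤ p.eval (𝓕.mi A)


private lemma enum_aux {A : Set ℕ} {c : ℕ} (hc : c ∈ A) (K : ℕ) :
    IsEnum (fun k => if k < K then c else if (k - K) ∈ A then k - K else c) A := by
  ext x
  constructor
  · rintro ⟨k, hk⟩
    simp only at hk
    split_ifs at hk with h1 h2 <;> subst hk <;> first | exact hc | exact h2
  · intro hx
    refine ⟨x + K, ?_⟩
    simp [Nat.add_sub_cancel, hx]

/-- If an indexed family contains two distinct members with
nonempty intersection, then it is not PRT-learnable. -/
theorem stmt0 (𝓕 : IndexedFamily) (A B : Set ℕ) (hA : 𝓕.Mem A) (hB : 𝓕.Mem B)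
    (hne : A ≠ B) (hint : (A ∩ B).Nonempty) : ¬ PRT 𝓕 := by
  rintro ⟨M, p, hlearn⟩
  obtain ⟨c, hcA, hcB⟩ := hint
  set K := max (p.eval (𝓕.mi A)) (p.eval (𝓕.mi B)) with hK
  set f : ℕ → ℕ := fun k => if k < K then c else if (k - K) ∈ A then k - K else c with hf
  set g : ℕ → ℕ := fun k => if k < K then c else if (k - K) ∈ B then k - K else c with hg
  obtain ⟨hA', hFA, nA, hSA, tA, htA, htAlt⟩ := hlearn A hA f (enum_aux hcA K)
  obtain ⟨hB', hFB, nB, hSB, tB, htB, htBlt⟩ := hlearn B hB g (enum_aux hcB K)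
  have hlenA : nA ≤ tA := by
    have := M.length_le_time htA
    simpa [str] using this
  have hlenB : nB ≤ tB := by
    have := M.length_le_time htB
    simpa [str] using this
  have hnA : nA < K := lt_of_le_of_lt hlenA (lt_of_lt_of_le htAlt (le_max_left _ _))
  have hnB : nB < K := lt_of_le_of_lt hlenB (lt_of_lt_of_le htBlt (le_max_right _ _))
  set m := max nA nB with hm
  have hmK : m < K := max_lt hnA hnB
  have hstr : str f m = str g m := by
    apply List.map_congr_left
    intro i hi
    have hiK : i < K := lt_of_lt_of_le (List.mem_range.mp hi) (le_of_lt hmK)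
    simp [hf, hg, hiK]
  have e1 := hSA m (le_max_left _ _)
  have e2 := hSB m (le_max_right _ _)
  rw [hstr, e2] at e1
  have : hA' = hB' := (Part.some_inj.mp e1).symm
  exact hne (by rw [← hFA, ← hFB, this])

end TeachLearn
end

section
/- PRT ⊊ PRT[O] ⊆ PRT[T,O] and PRT ⊊ PRT[T] ⊆ PRT[T,O], where PRT, PRT[O], PRT[T], PRT[T,O] denote respectively the classes of PRT-learnable, PRT-learnable-with-oracle, PRT-learnable-with-teacher, and PRT-learnable-with-teacher-and-oracle indexed families. In particular the family 𝓗₂ of all three-element multisets coded by a fixed polynomial-time triple-coding (H_n = content of the decoded triple (n)₃) is PRT[O]-learnable and PRT[T]-learnable but not PRT-learnable. -/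
/-!
Common framework: indexed families of c.e. sets, enumerations (texts),
learning machines with run-time, membership-oracle machines, teachers,
and the learning criteria PRT/PSD/PMC/PCS with oracle/teacher variants.
-/

namespace TeachLearn

attribute [local instance] Classical.propDecidable

/-- The three-element (multi)set coded by `n` under the fixed polynomial-time
triple coding: `H_n` is the content of the decoded triple `(n)₃`. -/
def tripleSet (n : ℕ) : Set ℕ :=
  {(Nat.unpair n).1, (Nat.unpair (Nat.unpair n).2).1, (Nat.unpair (Nat.unpair n).2).2}

/-! ### Auxiliary material for the proof of `stmt1` -/

section Aux

lemma size_le_self (n : ℕ) : Nat.size n ≤ n := Nat.size_le.2 (Nat.lt_two_pow_self (n := n))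

lemma str_length (f : ℕ → ℕ) (n : ℕ) : (str f n).length = n := by simp [str]

lemma str_prefix (f : ℕ → ℕ) {m n : ℕ} (h : m ≤ n) : str f m <+: str f n := by
  have : List.range m <+: List.range n := by
    refine ⟨(List.range (n - m)).map (m + ·), ?_⟩
    rw [← List.range_add]
    congr 1
    omega
  exact this.map f

lemma mem_str {f : ℕ → ℕ} {x n : ℕ} : x ∈ str f n ↔ ∃ i < n, f i = x := by
  simp [str]

lemma str_append (f : ℕ → ℕ) {m n : ℕ} (h : m ≤ n) :
    str f n = str f m ++ (List.range (n - m)).map (fun i => f (m + i)) := by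
  have hmn : n = m + (n - m) := by omega
  conv_lhs => rw [str, hmn, List.range_add]
  rw [List.map_append, List.map_map, str]
  rfl

/-- First-occurrence step function. -/
def foStep (acc : List ℕ) (x : ℕ) : List ℕ :=
  if List.idxOf x acc < acc.length then acc else acc ++ [x]

/-- First-occurrence sublist: keeps the first occurrence of each element. -/
def firstOccs (l : List ℕ) : List ℕ := l.foldl foStep []

lemma foStep_eq (acc : List ℕ) (x : ℕ) :
    foStep acc x = if x ∈ acc then acc else acc ++ [x] := by
  simp [foStep, List.idxOf_lt_length_iff]

lemma foldl_foStep_prefix (acc : List ℕ) (l : List ℕ) : acc <+: l.foldl foStep acc := by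
  induction l generalizing acc with
  | nil => exact List.prefix_refl _
  | cons a l ih =>
    refine List.IsPrefix.trans ?_ (ih (foStep acc a))
    rw [foStep_eq]; split
    · exact List.prefix_refl _
    · exact List.prefix_append _ _

lemma mem_foStep {x : ℕ} (acc : List ℕ) (a : ℕ) :
    x ∈ foStep acc a ↔ x ∈ acc ∨ x = a := by
  rw [foStep_eq]
  split <;> rename_i h
  · constructor
    · exact Or.inl
    · rintro (hx | rfl) <;> assumption
  · simp

lemma mem_foldl_foStep {x : ℕ} (acc : List ℕ) (l : List ℕ) :
    x ∈ l.foldl foStep acc ↔ x ∈ acc ∨ x ∈ l := by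
  induction l generalizing acc with
  | nil => simp
  | cons a l ih =>
    rw [List.foldl_cons, ih, mem_foStep, List.mem_cons]
    tauto

lemma foldl_foStep_const {acc : List ℕ} {l : List ℕ} (h : ∀ x ∈ l, x ∈ acc) :
    l.foldl foStep acc = acc := by
  induction l generalizing acc with
  | nil => rfl
  | cons a l ih =>
    have ha : a ∈ acc := h a List.mem_cons_self
    simp only [List.foldl_cons, foStep_eq, if_pos ha]
    exact ih fun x hx => h x (List.mem_cons_of_mem _ hx)

lemma nodup_foldl_foStep {acc : List ℕ} (h : acc.Nodup) (l : List ℕ) :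
    (l.foldl foStep acc).Nodup := by
  induction l generalizing acc with
  | nil => exact h
  | cons a l ih =>
    refine ih ?_
    rw [foStep_eq]; split
    · exact h
    · rename_i ha
      simpa [List.nodup_append] using ⟨h, fun b hb hba => ha (hba ▸ hb)⟩

lemma firstOccs_append (l₁ l₂ : List ℕ) :
    firstOccs (l₁ ++ l₂) = l₂.foldl foStep (firstOccs l₁) := by
  simp [firstOccs, List.foldl_append]

lemma mem_firstOccs {x : ℕ} (l : List ℕ) : x ∈ firstOccs l ↔ x ∈ l := by
  simp [firstOccs, mem_foldl_foStep]

lemma firstOccs_nodup (l : List ℕ) : (firstOccs l).Nodup :=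
  nodup_foldl_foStep List.nodup_nil l

lemma firstOccs_prefix_of_prefix {l₁ l₂ : List ℕ} (h : l₁ <+: l₂) :
    firstOccs l₁ <+: firstOccs l₂ := by
  obtain ⟨r, rfl⟩ := h
  rw [firstOccs_append]
  exact foldl_foStep_prefix _ _

lemma firstOccs_stable {l₁ l₂ : List ℕ} (h : ∀ x ∈ l₂, x ∈ l₁) :
    firstOccs (l₁ ++ l₂) = firstOccs l₁ := by
  rw [firstOccs_append]
  exact foldl_foStep_const fun x hx => (mem_firstOccs _).2 (h x hx)

/-- Padding a list (of ≤ 3 distinct elements) to a coded triple. -/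
def padCode (l : List ℕ) : ℕ :=
  Nat.pair (l.getD 0 0) (Nat.pair (l.getD 1 (l.getD 0 0)) (l.getD 2 (l.getD 1 (l.getD 0 0))))

lemma tripleSet_padCode {l : List ℕ} (h1 : l ≠ []) (h3 : l.length ≤ 3) :
    tripleSet (padCode l) = {x | x ∈ l} := by
  match l, h1 with
  | [a], _ => ext x; simp [padCode, tripleSet, Nat.unpair_pair]
  | [a, b], _ => ext x; simp [padCode, tripleSet, Nat.unpair_pair]
  | [a, b, c], _ => ext x; simp [padCode, tripleSet, Nat.unpair_pair]
  | a :: b :: c :: d :: l, _ => simp only [List.length_cons] at h3; omega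

lemma getD_le {l : List ℕ} {m d : ℕ} (h : ∀ x ∈ l, x ≤ m) (hd : d ≤ m) (i : ℕ) :
    l.getD i d ≤ m := by
  by_cases hi : i < l.length
  · rw [List.getD_eq_getElem l d hi]
    exact h _ (List.getElem_mem _)
  · rw [List.getD_eq_default l d (by omega)]
    exact hd

lemma padCode_lt {l : List ℕ} {m : ℕ} (h : ∀ x ∈ l, x ≤ m) :
    padCode l < (m + 1) ^ 4 := by
  have h0 : (0 : ℕ) ≤ m := Nat.zero_le m
  have ha : l.getD 0 0 ≤ m := getD_le h h0 0
  have hb : l.getD 1 (l.getD 0 0) ≤ m := getD_le h ha 1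
  have hc : l.getD 2 (l.getD 1 (l.getD 0 0)) ≤ m := getD_le h hb 2
  set a := l.getD 0 0
  set b := l.getD 1 a
  set c := l.getD 2 b
  have hbc : Nat.pair b c < (m + 1) ^ 2 := by
    calc Nat.pair b c < (max b c + 1) ^ 2 := Nat.pair_lt_max_add_one_sq b c
    _ ≤ (m + 1) ^ 2 := by
        have : max b c ≤ m := by omega
        exact Nat.pow_le_pow_left (by omega) 2
  have : Nat.pair a (Nat.pair b c) < (max a (Nat.pair b c) + 1) ^ 2 :=
    Nat.pair_lt_max_add_one_sq _ _
  have hmax : max a (Nat.pair b c) + 1 ≤ (m + 1) ^ 2 := by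
    have h1 : a + 1 ≤ (m + 1) ^ 2 := by nlinarith
    omega
  calc padCode l < (max a (Nat.pair b c) + 1) ^ 2 := this
  _ ≤ ((m + 1) ^ 2) ^ 2 := Nat.pow_le_pow_left hmax 2
  _ = (m + 1) ^ 4 := by ring

end Aux

section AuxComp

open Primrec in
lemma primrec_foStep : Primrec₂ foStep := by
  have h₁ : PrimrecPred fun p : List ℕ × ℕ => List.idxOf p.2 p.1 < p.1.length :=
    PrimrecRel.comp nat_lt (list_idxOf.comp snd fst) (list_length.comp fst)
  exact (Primrec.ite h₁ fst (list_concat.comp fst snd)).to₂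

open Primrec in
lemma primrec_firstOccs : Primrec firstOccs := by
  have := Primrec.list_foldl (f := fun l : List ℕ => l) (g := fun _ : List ℕ => ([] : List ℕ))
    (h := fun _ p => foStep p.1 p.2) Primrec.id (const _)
    ((primrec_foStep.comp (fst.comp snd) (snd.comp snd)).to₂)
  exact this.of_eq fun l => rfl

open Primrec in
lemma primrec_padCode : Primrec padCode := by
  have hg : ∀ i : ℕ, Primrec₂ fun (l : List ℕ) (d : ℕ) => l.getD i d := by
    intro i
    have : Primrec fun p : List ℕ × ℕ => (p.1[i]?).getD p.2 :=
      option_getD.comp (list_getElem?.comp fst (const i)) snd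
    exact this.to₂.of_eq fun l d => List.getD_eq_getElem?_getD.symm
  have ha : Primrec fun l : List ℕ => l.getD 0 0 := (hg 0).comp .id (const 0)
  have hb : Primrec fun l : List ℕ => l.getD 1 (l.getD 0 0) := (hg 1).comp .id ha
  have hc : Primrec fun l : List ℕ => l.getD 2 (l.getD 1 (l.getD 0 0)) := (hg 2).comp .id hb
  exact Primrec₂.natPair.comp ha (Primrec₂.natPair.comp hb hc)

/-- The list of "yes" query positions recorded in the answer list. -/
def trueList (σ : List ℕ) (ans : List Bool) : List ℕ :=
  (List.range (σ.length + 1)).filter (fun q => ans.getD q false)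

/-- The value computed by the oracle machine: keep querying `0, 1, …, |σ|`;
then output the code of the set of positive answers. -/
def ostepval (x : List ℕ × List Bool) : ℕ :=
  if x.2.length ≤ x.1.length then 2 * x.2.length
  else 2 * padCode (trueList x.1 x.2) + 1

open Primrec in
lemma primrec_ostepval : Primrec ostepval := by
  have hfold : ∀ (acc : List ℕ) (l : List ℕ) (ans : List Bool),
      l.foldl (fun acc q => if ans.getD q false then acc ++ [q] else acc) acc
        = acc ++ l.filter (fun q => ans.getD q false) := by
    intro acc l ans
    induction l generalizing acc with
    | nil => simp
    | cons a l ih =>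
      by_cases h : ans.getD a false = true
      · rw [List.foldl_cons, List.filter_cons, if_pos h, if_pos h, ih, List.append_assoc,
          List.singleton_append]
      · rw [List.foldl_cons, List.filter_cons, if_neg h, if_neg h, ih]
  have hgd : Primrec₂ fun (ans : List Bool) (q : ℕ) => ans.getD q false := list_getD false
  have htl : Primrec₂ trueList := by
    have := Primrec.list_foldl
      (f := fun x : List ℕ × List Bool => List.range (x.1.length + 1))
      (g := fun _ : List ℕ × List Bool => ([] : List ℕ))
      (h := fun x p => if x.2.getD p.2 false then p.1 ++ [p.2] else p.1)
      (list_range.comp (succ.comp (list_length.comp fst))) (const _)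
      (Primrec.ite (Primrec.eq.comp (hgd.comp (snd.comp fst) (snd.comp snd)) (const true))
        (list_concat.comp (fst.comp snd) (snd.comp snd)) (fst.comp snd)).to₂
    refine this.to₂.of_eq fun σ ans => ?_
    rw [hfold]
    simp [trueList]
  have hcond : PrimrecPred fun x : List ℕ × List Bool => x.2.length ≤ x.1.length :=
    PrimrecRel.comp nat_le (list_length.comp snd) (list_length.comp fst)
  refine Primrec.ite hcond
    (nat_mul.comp (const 2) (list_length.comp snd))
    (succ.comp (nat_mul.comp (const 2) (primrec_padCode.comp
      (htl.comp fst snd))))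

/-- The indexed family of all three-element multisets. -/
def H2 : IndexedFamily where
  F := tripleSet
  nonempty := fun n => ⟨(Nat.unpair n).1, Or.inl rfl⟩
  uce := by
    refine ComputablePred.to_re (ComputablePred.computable_iff.2
      ⟨fun p => (p.1 == (Nat.unpair p.2).1 || p.1 == (Nat.unpair (Nat.unpair p.2).2).1
        || p.1 == (Nat.unpair (Nat.unpair p.2).2).2), ?_, ?_⟩)
    · have h1 : Primrec fun p : ℕ × ℕ => (Nat.unpair p.2).1 :=
        (Primrec.fst.comp (Primrec.unpair.comp Primrec.snd))
      have h2 : Primrec fun p : ℕ × ℕ => (Nat.unpair (Nat.unpair p.2).2).1 :=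
        (Primrec.fst.comp (Primrec.unpair.comp (Primrec.snd.comp
          (Primrec.unpair.comp Primrec.snd))))
      have h3 : Primrec fun p : ℕ × ℕ => (Nat.unpair (Nat.unpair p.2).2).2 :=
        (Primrec.snd.comp (Primrec.unpair.comp (Primrec.snd.comp
          (Primrec.unpair.comp Primrec.snd))))
      have hb : ∀ {g : ℕ × ℕ → ℕ}, Primrec g → Primrec fun p : ℕ × ℕ => (p.1 == g p) :=
        fun hg => Primrec.beq.comp Primrec.fst hg
      exact Primrec.to_comp (Primrec.or.comp (Primrec.or.comp (hb h1) (hb h2)) (hb h3))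
    · funext p
      simp only [tripleSet, Set.mem_insert_iff, Set.mem_singleton_iff]
      simp [Bool.or_eq_true, beq_iff_eq, or_assoc]

lemma H2_F (n : ℕ) : H2.F n = tripleSet n := rfl

end AuxComp

section Machines

/-- The big polynomial bound used everywhere. -/
noncomputable def pBig : Polynomial ℕ :=
  Polynomial.C 3 * (Polynomial.X + 1) ^ 4 + Polynomial.C 5 * Polynomial.X + Polynomial.C 20

lemma pBig_eval (m : ℕ) : pBig.eval m = 3 * (m + 1) ^ 4 + 5 * m + 20 := by
  simp [pBig]

/-- The teacher that reports first occurrences. -/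
def teachT : Teacher where
  t := firstOccs
  computable := primrec_firstOccs.to_comp
  mono := fun _ _ h => firstOccs_prefix_of_prefix h
  content_sub := fun σ _ hx => (mem_firstOccs σ).1 hx

lemma take_eq_of_prefix {α : Type*} {σ τ : List α} (h : σ <+: τ) {k : ℕ} (hk : k ≤ σ.length) :
    σ.take k = τ.take k := by
  obtain ⟨r, rfl⟩ := h
  rw [List.take_append, Nat.sub_eq_zero_of_le hk, List.take_zero,
    List.append_nil]

/-- Run time of the teacher's learner. -/
noncomputable def timeMt (σ : List ℕ) : ℕ :=
  σ.length + 1 + (Finset.range (σ.length + 1)).sup fun k => Nat.size (padCode (σ.take k))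

/-- The learner used with the teacher `teachT`. -/
noncomputable def Mt : Machine where
  eval σ := Part.some (padCode σ)
  partrec := primrec_padCode.to_comp
  time σ := Part.some (timeMt σ)
  time_dom := fun σ => by simp
  length_le_time := fun σ t ht => by
    rw [Part.mem_some_iff] at ht; subst ht; unfold timeMt; omega
  size_le_time := fun σ t h ht hh => by
    rw [Part.mem_some_iff] at ht hh; subst ht; subst hh
    have : Nat.size (padCode (σ.take σ.length)) ≤
        (Finset.range (σ.length + 1)).sup fun k => Nat.size (padCode (σ.take k)) :=
      Finset.le_sup (f := fun k => Nat.size (padCode (σ.take k)))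
        (Finset.mem_range.2 (Nat.lt_succ_self _))
    rw [List.take_length] at this
    unfold timeMt; omega
  time_mono := fun σ τ s t hpre hs ht => by
    rw [Part.mem_some_iff] at hs ht; subst hs; subst ht
    have hlen : σ.length ≤ τ.length := hpre.length_le
    have hsup : ((Finset.range (σ.length + 1)).sup fun k => Nat.size (padCode (σ.take k))) ≤
        (Finset.range (τ.length + 1)).sup fun k => Nat.size (padCode (τ.take k)) := by
      refine Finset.sup_le fun k hk => ?_
      rw [Finset.mem_range] at hk
      rw [take_eq_of_prefix hpre (by omega)]
      exact Finset.le_sup (f := fun k => Nat.size (padCode (τ.take k)))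
        (Finset.mem_range.2 (by omega))
    unfold timeMt; omega

/-- Run time of the oracle learner. -/
noncomputable def timeMo (x : List ℕ × List Bool) : ℕ :=
  x.1.length + x.2.length + 1 +
    (Finset.range (x.1.length + 1)).sup fun i =>
      (Finset.range (x.2.length + 1)).sup fun j => Nat.size (ostepval (x.1.take i, x.2.take j))

/-- The oracle learner: query `0, 1, …, |σ|`, then code the positive answers. -/
noncomputable def Mo : OMachine where
  step x := Part.some (ostepval x)
  partrec := primrec_ostepval.to_comp
  time x := Part.some (timeMo x)
  time_dom := fun x => by simp
  length_le_time := fun x t ht => by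
    rw [Part.mem_some_iff] at ht; subst ht; unfold timeMo; omega
  queries_le_time := fun x t ht => by
    rw [Part.mem_some_iff] at ht; subst ht; unfold timeMo; omega
  size_le_time := fun x t v ht hv => by
    rw [Part.mem_some_iff] at ht hv; subst ht; subst hv
    obtain ⟨σ, ans⟩ := x
    have h1 : Nat.size (ostepval (σ.take σ.length, ans.take ans.length)) ≤
        (Finset.range (ans.length + 1)).sup fun j =>
          Nat.size (ostepval (σ.take σ.length, ans.take j)) :=
      Finset.le_sup (f := fun j => Nat.size (ostepval (σ.take σ.length, ans.take j)))
        (Finset.mem_range.2 (Nat.lt_succ_self _))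
    have h2 : ((Finset.range (ans.length + 1)).sup fun j =>
          Nat.size (ostepval (σ.take σ.length, ans.take j)))
        ≤ (Finset.range (σ.length + 1)).sup fun i =>
            (Finset.range (ans.length + 1)).sup fun j =>
              Nat.size (ostepval (σ.take i, ans.take j)) :=
      Finset.le_sup (f := fun i => (Finset.range (ans.length + 1)).sup fun j =>
        Nat.size (ostepval (σ.take i, ans.take j))) (Finset.mem_range.2 (Nat.lt_succ_self _))
    have h3 := le_trans h1 h2
    rw [List.take_length, List.take_length] at h3
    dsimp only [timeMo] at h3 ⊢
    omega
  time_mono := fun σ τ a b s t hst hab hs ht => by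
    rw [Part.mem_some_iff] at hs ht; subst hs; subst ht
    have hl1 : σ.length ≤ τ.length := hst.length_le
    have hl2 : a.length ≤ b.length := hab.length_le
    have hsup : ((Finset.range (σ.length + 1)).sup fun i =>
          (Finset.range (a.length + 1)).sup fun j => Nat.size (ostepval (σ.take i, a.take j)))
        ≤ (Finset.range (τ.length + 1)).sup fun i =>
            (Finset.range (b.length + 1)).sup fun j => Nat.size (ostepval (τ.take i, b.take j)) := by
      refine Finset.sup_le fun i hi => Finset.sup_le fun j hj => ?_
      rw [Finset.mem_range] at hi hj
      rw [take_eq_of_prefix hst (by omega), take_eq_of_prefix hab (by omega)]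
      exact le_trans (Finset.le_sup (f := fun j => Nat.size (ostepval (τ.take i, b.take j)))
          (Finset.mem_range.2 (by omega)))
        (Finset.le_sup (f := fun i => (Finset.range (b.length + 1)).sup fun j =>
          Nat.size (ostepval (τ.take i, b.take j))) (Finset.mem_range.2 (by omega)))
    dsimp only [timeMo]
    omega

end Machines

section TripleFacts

variable {𝓗 : IndexedFamily}

lemma mi_mem {A : Set ℕ} (h : 𝓗.Mem A) : 𝓗.F (𝓗.mi A) = A :=
  Nat.sInf_mem h

lemma triple_le {n : ℕ} {x : ℕ} (hx : x ∈ tripleSet n) : x ≤ n := by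
  rcases hx with h | h | h
  · exact h ▸ Nat.unpair_left_le n
  · exact h ▸ le_trans (Nat.unpair_left_le _) (Nat.unpair_right_le n)
  · exact h ▸ le_trans (Nat.unpair_right_le _) (Nat.unpair_right_le n)

lemma list_len_le_three {A : Set ℕ} {n : ℕ} (hA : A = tripleSet n) {l : List ℕ}
    (hnd : l.Nodup) (hsub : ∀ x ∈ l, x ∈ A) : l.length ≤ 3 := by
  classical
  set u1 := (Nat.unpair n).1
  set u2 := (Nat.unpair (Nat.unpair n).2).1
  set u3 := (Nat.unpair (Nat.unpair n).2).2
  have hfin : l.toFinset ⊆ ({u1, u2, u3} : Finset ℕ) := by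
    intro x hx
    rw [List.mem_toFinset] at hx
    have := hsub x hx
    rw [hA] at this
    simp only [tripleSet, Set.mem_insert_iff, Set.mem_singleton_iff] at this
    rcases this with h | h | h <;> simp [h, u1, u2, u3]
  have hcard : l.toFinset.card ≤ ({u1, u2, u3} : Finset ℕ).card := Finset.card_le_card hfin
  have h3 : ({u1, u2, u3} : Finset ℕ).card ≤ 3 := by
    refine le_trans (Finset.card_insert_le _ _) ?_
    have := Finset.card_insert_le u2 ({u3} : Finset ℕ)
    simp only [Finset.card_singleton] at this
    omega
  rw [List.toFinset_card_of_nodup hnd] at hcard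
  omega

lemma enum_mem {f : ℕ → ℕ} {A : Set ℕ} (hf : IsEnum f A) (i : ℕ) : f i ∈ A :=
  hf ▸ ⟨i, rfl⟩

lemma enum_appears {f : ℕ → ℕ} {A : Set ℕ} (hf : IsEnum f A) {x : ℕ} (hx : x ∈ A) :
    ∃ i, f i = x := by
  rw [IsEnum] at hf
  rw [← hf] at hx
  exact hx

lemma exists_stage {f : ℕ → ℕ} {A : Set ℕ} (hf : IsEnum f A) {n : ℕ}
    (hA : A = tripleSet n) : ∃ n₀, 0 < n₀ ∧ ∀ x ∈ A, x ∈ str f n₀ := by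
  obtain ⟨i1, hi1⟩ := enum_appears hf (show (Nat.unpair n).1 ∈ A by rw [hA]; left; rfl)
  obtain ⟨i2, hi2⟩ := enum_appears hf
    (show (Nat.unpair (Nat.unpair n).2).1 ∈ A by rw [hA]; right; left; rfl)
  obtain ⟨i3, hi3⟩ := enum_appears hf
    (show (Nat.unpair (Nat.unpair n).2).2 ∈ A by rw [hA]; right; right; rfl)
  refine ⟨max i1 (max i2 i3) + 1, Nat.succ_pos _, fun x hx => ?_⟩
  rw [hA] at hx
  rcases hx with h | h | h <;> rw [mem_str]
  · exact ⟨i1, by omega, h ▸ hi1⟩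
  · exact ⟨i2, by omega, h ▸ hi2⟩
  · exact ⟨i3, by omega, h ▸ hi3⟩

lemma pBig_gt₁ {m t : ℕ} (h : t ≤ (m + 1) ^ 4 + 4) : t < pBig.eval m := by
  rw [pBig_eval]
  have : 1 ≤ (m + 1) ^ 4 := Nat.one_le_pow _ _ (by omega)
  omega

/-- `𝓗` is PRT[T]-learnable whenever it indexes all the triple sets. -/
lemma prtt_of_triple (hF : ∀ n, 𝓗.F n = tripleSet n) : PRTT 𝓗 := by
  refine ⟨Mt, teachT, pBig, ?_⟩
  intro A hmem f hf
  set m := 𝓗.mi A with hm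
  have hmA : A = tripleSet m := by rw [← hF m]; exact (mi_mem hmem).symm
  have hxle : ∀ x ∈ A, x ≤ m := fun x hx => triple_le (hmA ▸ hx)
  obtain ⟨n₀, hn₀pos, hsub⟩ := exists_stage hf hmA
  set d := firstOccs (str f n₀) with hd
  have hdmem : ∀ x, x ∈ d ↔ x ∈ A := by
    intro x
    rw [hd, mem_firstOccs]
    constructor
    · intro hx
      obtain ⟨i, _, rfl⟩ := mem_str.1 hx
      exact enum_mem hf i
    · exact fun hx => hsub x hx
  have hdlen : d.length ≤ 3 :=
    list_len_le_three hmA (firstOccs_nodup _) (fun x hx => (hdmem x).1 hx)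
  have hdne : d ≠ [] := by
    have : (Nat.unpair m).1 ∈ d := (hdmem _).2 (by rw [hmA]; left; rfl)
    exact List.ne_nil_of_mem this
  refine ⟨padCode d, ?_, n₀, ?_, timeMt d, ?_, ?_⟩
  · rw [hF, tripleSet_padCode hdne hdlen]
    ext x
    exact hdmem x
  · -- settling
    intro M' hM'
    have hteach : teachT.t (str f M') = d := by
      show firstOccs (str f M') = d
      rw [str_append f hM', hd]
      refine firstOccs_stable fun x hx => ?_
      obtain ⟨i, -, rfl⟩ := List.mem_map.1 hx
      exact hsub _ (enum_mem hf _)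
    show Mt.eval (teachT.t (str f M')) = Part.some (padCode d)
    rw [hteach]
    rfl
  · -- time membership
    have hteach : teachT.t (str f n₀) = d := rfl
    show timeMt d ∈ Mt.time (teachT.t (str f n₀))
    rw [hteach]
    exact Part.mem_some _
  · -- time bound
    refine pBig_gt₁ ?_
    have hsup : ((Finset.range (d.length + 1)).sup fun k => Nat.size (padCode (d.take k)))
        ≤ (m + 1) ^ 4 := by
      refine Finset.sup_le fun k _ => ?_
      have hlt : padCode (d.take k) < (m + 1) ^ 4 :=
        padCode_lt fun x hx => hxle x ((hdmem x).1 (List.mem_of_mem_take hx))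
      exact le_trans (size_le_self _) (by omega)
    unfold timeMt
    omega

end TripleFacts

section OracleLearn

/-- The canonical oracle-answer list for membership queries `0, …, k-1`. -/
noncomputable def ansF (A : Set ℕ) (k : ℕ) : List Bool :=
  (List.range k).map fun q => decide (q ∈ A)

lemma ansF_length (A : Set ℕ) (k : ℕ) : (ansF A k).length = k := by simp [ansF]

lemma ansF_succ (A : Set ℕ) (k : ℕ) :
    ansF A (k + 1) = ansF A k ++ [decide (k ∈ A)] := by
  simp [ansF, List.range_succ]

lemma ansF_getD {A : Set ℕ} {k q : ℕ} (h : q < k) :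
    (ansF A k).getD q false = decide (q ∈ A) := by
  rw [List.getD_eq_getElem _ _ (by rw [ansF_length]; omega)]
  simp [ansF]

lemma ansF_getD_true {A : Set ℕ} {k q : ℕ} :
    (ansF A k).getD q false = true ↔ q < k ∧ q ∈ A := by
  by_cases h : q < k
  · rw [ansF_getD h]
    simp [h]
  · rw [List.getD_eq_default _ _ (by rw [ansF_length]; omega)]
    simp [h]

lemma ansF_take (A : Set ℕ) (k j : ℕ) : (ansF A k).take j = ansF A (min j k) := by
  rw [ansF, ← List.map_take, List.take_range]
  rfl

lemma step_Mo (x : List ℕ × List Bool) : Mo.step x = Part.some (ostepval x) := rfl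

lemma time_Mo (x : List ℕ × List Bool) : Mo.time x = Part.some (timeMo x) := rfl

lemma reach_ansF (A : Set ℕ) (σ : List ℕ) :
    ∀ k, k ≤ σ.length + 1 → Mo.Reach A σ (ansF A k) := by
  intro k
  induction k with
  | zero =>
    intro _
    have h0 : ansF A 0 = [] := rfl
    rw [h0]
    exact OMachine.Reach.nil
  | succ k ih =>
    intro hk
    rw [ansF_succ]
    refine OMachine.Reach.query (ih (by omega)) ?_
    rw [step_Mo, Part.mem_some_iff]
    rw [ostepval]
    dsimp only
    rw [ansF_length, if_pos (by omega)]

lemma trueList_canon {A : Set ℕ} {m : ℕ} (hle : ∀ x ∈ A, x ≤ m) {σ : List ℕ}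
    (hm : m ≤ σ.length) :
    trueList σ (ansF A (σ.length + 1))
      = (List.range (m + 1)).filter fun q => decide (q ∈ A) := by
  have hc : (List.range (σ.length + 1)).filter
        (fun q => (ansF A (σ.length + 1)).getD q false)
      = (List.range (σ.length + 1)).filter (fun q => decide (q ∈ A)) := by
    refine List.filter_congr ?_
    intro q hq
    rw [List.mem_range] at hq
    exact ansF_getD hq
  have hnil : ((List.range (σ.length - m)).map (fun x => (m + 1) + x)).filter
      (fun q => decide (q ∈ A)) = [] := by
    rw [List.filter_eq_nil_iff]
    intro a ha
    obtain ⟨x, -, rfl⟩ := List.mem_map.1 ha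
    simp only [decide_eq_true_iff]
    intro hmem
    have := hle _ hmem
    omega
  have hsplit : List.range (σ.length + 1) = List.range (m + 1)
      ++ (List.range (σ.length - m)).map (fun x => (m + 1) + x) := by
    rw [← List.range_add]
    congr 1
    omega
  rw [trueList, hc, hsplit, List.filter_append, hnil, List.append_nil]

lemma ostepval_size_le {A : Set ℕ} {m : ℕ} (hle : ∀ x ∈ A, x ≤ m) (σp : List ℕ)
    (ansp : List Bool) (hans : ∀ q, ansp.getD q false = true → q ∈ A)
    (hlen : ansp.length ≤ m + 2) :
    Nat.size (ostepval (σp, ansp)) ≤ 2 * (m + 1) ^ 4 + 2 * m + 4 := by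
  rw [ostepval]
  dsimp only
  split
  · exact le_trans (size_le_self _) (by omega)
  · have hpc : padCode (trueList σp ansp) < (m + 1) ^ 4 := by
      refine padCode_lt fun x hx => ?_
      rw [trueList, List.mem_filter] at hx
      exact hle x (hans x hx.2)
    exact le_trans (size_le_self _) (by omega)

lemma pBig_gt₂ {m t : ℕ} (h : t ≤ 2 * (m + 1) ^ 4 + 5 * m + 12) : t < pBig.eval m := by
  rw [pBig_eval]
  have : 1 ≤ (m + 1) ^ 4 := Nat.one_le_pow _ _ (by omega)
  omega

/-- `𝓗` is PRT[O]-learnable whenever it indexes all the triple sets. -/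
lemma prto_of_triple {𝓗 : IndexedFamily} (hF : ∀ n, 𝓗.F n = tripleSet n) : PRTO 𝓗 := by
  refine ⟨Mo, pBig, ?_⟩
  intro A hmem f hf
  set m := 𝓗.mi A with hm
  have hmA : A = tripleSet m := by rw [← hF m]; exact (mi_mem hmem).symm
  have hxle : ∀ x ∈ A, x ≤ m := fun x hx => triple_le (hmA ▸ hx)
  set l : List ℕ := (List.range (m + 1)).filter (fun q => decide (q ∈ A)) with hl
  have hlmem : ∀ x, x ∈ l ↔ x ∈ A := by
    intro x
    rw [hl, List.mem_filter, List.mem_range]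
    constructor
    · intro hx
      exact of_decide_eq_true hx.2
    · intro hx
      exact ⟨by have := hxle x hx; omega, decide_eq_true hx⟩
  have hlnodup : l.Nodup := List.nodup_range.filter _
  have hllen : l.length ≤ 3 := list_len_le_three hmA hlnodup fun x hx => (hlmem x).1 hx
  have hlne : l ≠ [] := by
    have : (Nat.unpair m).1 ∈ l := (hlmem _).2 (by rw [hmA]; left; rfl)
    exact List.ne_nil_of_mem this
  set h := padCode l with hh
  have hFh : 𝓗.F h = A := by
    rw [hF, hh, tripleSet_padCode hlne hllen]
    ext x
    exact hlmem x
  have hout : ∀ M', m ≤ M' → Mo.Out A (str f M') h (ansF A (M' + 1)) := by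
    intro M' hM'
    constructor
    · exact reach_ansF A _ _ (by rw [str_length])
    · rw [step_Mo, Part.mem_some_iff, ostepval]
      dsimp only
      rw [ansF_length, str_length, if_neg (by omega)]
      rw [show trueList (str f M') (ansF A (M' + 1))
            = trueList (str f M') (ansF A ((str f M').length + 1)) by rw [str_length]]
      rw [trueList_canon hxle (by rw [str_length]; omega)]
  refine ⟨h, hFh, m, fun M' hM' => ⟨_, hout M' hM'⟩,
    ansF A (m + 1), timeMo (str f m, ansF A (m + 1)), hout m le_rfl, ?_, ?_⟩
  · rw [time_Mo]
    exact Part.mem_some _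
  · refine pBig_gt₂ ?_
    have hsup : ((Finset.range ((str f m).length + 1)).sup fun i =>
        (Finset.range ((ansF A (m + 1)).length + 1)).sup fun j =>
          Nat.size (ostepval ((str f m).take i, (ansF A (m + 1)).take j)))
        ≤ 2 * (m + 1) ^ 4 + 2 * m + 4 := by
      refine Finset.sup_le fun i _ => Finset.sup_le fun j _ => ?_
      refine ostepval_size_le hxle _ _ ?_ ?_
      · intro q hq
        rw [ansF_take] at hq
        exact (ansF_getD_true.1 hq).2
      · rw [List.length_take, ansF_length]
        omega
    rw [timeMo] at *
    dsimp only at hsup ⊢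
    rw [str_length, ansF_length] at *
    omega

end OracleLearn

section Transfers

lemma size_two_mul_add_one (h : ℕ) : Nat.size (2 * h + 1) ≤ Nat.size h + 1 := by
  refine Nat.size_le.2 ?_
  have := Nat.lt_size_self h
  calc 2 * h + 1 < 2 * 2 ^ Nat.size h := by omega
  _ = 2 ^ (Nat.size h + 1) := by rw [pow_succ]; ring

/-- Turn an ordinary machine into an oracle machine that asks no queries. -/
noncomputable def toOM (M : Machine) : OMachine where
  step x := (M.eval x.1).map fun h => 2 * h + 1
  partrec := by
    refine Partrec.map (M.partrec.comp Computable.fst) ?_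
    have : Primrec fun p : (List ℕ × List Bool) × ℕ => 2 * p.2 + 1 :=
      Primrec.succ.comp (Primrec.nat_mul.comp (Primrec.const 2) Primrec.snd)
    exact this.to_comp.to₂
  time x := (M.time x.1).map fun t => 2 * t + x.2.length + 1
  time_dom := fun x => by
    constructor
    · intro hd
      obtain ⟨v, hv⟩ := Part.dom_iff_mem.1 hd
      obtain ⟨s, hs, -⟩ := (Part.mem_map_iff _).1 hv
      have hd' := (M.time_dom x.1).1 (Part.dom_iff_mem.2 ⟨s, hs⟩)
      obtain ⟨h, hh⟩ := Part.dom_iff_mem.1 hd'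
      exact Part.dom_iff_mem.2 ⟨_, Part.mem_map _ hh⟩
    · intro hd
      obtain ⟨v, hv⟩ := Part.dom_iff_mem.1 hd
      obtain ⟨s, hs, -⟩ := (Part.mem_map_iff _).1 hv
      have hd' := (M.time_dom x.1).2 (Part.dom_iff_mem.2 ⟨s, hs⟩)
      obtain ⟨h, hh⟩ := Part.dom_iff_mem.1 hd'
      exact Part.dom_iff_mem.2 ⟨_, Part.mem_map _ hh⟩
  length_le_time := fun x t ht => by
    obtain ⟨s, hs, rfl⟩ := Part.mem_map_iff _ |>.1 ht
    have := M.length_le_time hs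
    omega
  queries_le_time := fun x t ht => by
    obtain ⟨s, hs, rfl⟩ := Part.mem_map_iff _ |>.1 ht
    omega
  size_le_time := fun x t v ht hv => by
    obtain ⟨s, hs, rfl⟩ := Part.mem_map_iff _ |>.1 ht
    obtain ⟨h, hh, rfl⟩ := Part.mem_map_iff _ |>.1 hv
    have h1 := M.size_le_time hs hh
    have h2 := size_two_mul_add_one h
    omega
  time_mono := fun σ τ a b s t hst hab hs ht => by
    dsimp only at hs ht
    obtain ⟨s₀, hs₀, rfl⟩ := Part.mem_map_iff _ |>.1 hs
    obtain ⟨t₀, ht₀, rfl⟩ := Part.mem_map_iff _ |>.1 ht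
    have := M.time_mono hst hs₀ ht₀
    have := hab.length_le
    omega

/-- The doubled polynomial bound. -/
noncomputable def pDouble (p : Polynomial ℕ) : Polynomial ℕ :=
  Polynomial.C 2 * p + Polynomial.C 1

lemma pDouble_eval (p : Polynomial ℕ) (m : ℕ) : (pDouble p).eval m = 2 * p.eval m + 1 := by
  simp [pDouble]

lemma toOM_out {M : Machine} {A : Set ℕ} {σ : List ℕ} {h : ℕ}
    (hev : M.eval σ = Part.some h) : (toOM M).Out A σ h [] := by
  constructor
  · exact OMachine.Reach.nil
  · show 2 * h + 1 ∈ (M.eval σ).map fun h => 2 * h + 1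
    exact Part.mem_map _ (by rw [hev]; exact Part.mem_some _)

lemma prt_to_prto {𝓕 : IndexedFamily} : PRT 𝓕 → PRTO 𝓕 := by
  rintro ⟨M, p, hl⟩
  refine ⟨toOM M, pDouble p, ?_⟩
  intro A hmem f hf
  obtain ⟨h, hFh, n, hset, t, ht, htlt⟩ := hl A hmem f hf
  refine ⟨h, hFh, n, ?_, [], 2 * t + ([] : List Bool).length + 1, toOM_out (hset n le_rfl), ?_, ?_⟩
  · intro m hm
    exact ⟨[], toOM_out (hset m hm)⟩
  · exact Part.mem_map _ ht
  · rw [pDouble_eval]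
    simp only [List.length_nil]
    omega

/-- The identity teacher. -/
def idTeacher : Teacher where
  t := id
  computable := Computable.id
  mono := fun _ _ h => h
  content_sub := fun _ _ h => h

lemma prt_to_prtt {𝓕 : IndexedFamily} : PRT 𝓕 → PRTT 𝓕 := by
  rintro ⟨M, p, hl⟩
  exact ⟨M, idTeacher, p, fun A hmem f hf => hl A hmem f hf⟩

/-- The identity oracle-teacher. -/
def idOTeacher : OTeacher where
  t := fun σ _ => σ
  computable := Computable.fst
  mono := fun _ _ _ _ h _ => h
  content_sub := fun _ _ _ h => h

/-- The answer-history function used to realize teacher-and-oracle learning. -/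
def histFun (ans₀ : List Bool) (n : ℕ) (c : ∀ k, n + 1 < k → List Bool) : ℕ → List Bool :=
  fun k => if k = n + 1 then ans₀ else if hk : n + 1 < k then c k hk else []

lemma histFun_zero (ans₀ : List Bool) (n : ℕ) (c : ∀ k, n + 1 < k → List Bool) :
    histFun ans₀ n c 0 = [] := by
  unfold histFun
  rw [if_neg (by omega), dif_neg (by omega)]

lemma histFun_self (ans₀ : List Bool) (n : ℕ) (c : ∀ k, n + 1 < k → List Bool) :
    histFun ans₀ n c (n + 1) = ans₀ := by
  unfold histFun
  rw [if_pos rfl]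

lemma histFun_gt (ans₀ : List Bool) (n : ℕ) (c : ∀ k, n + 1 < k → List Bool) {k : ℕ}
    (hk : n + 1 < k) : histFun ans₀ n c k = c k hk := by
  unfold histFun
  rw [if_neg (by omega), dif_pos hk]

lemma prto_to_prtto {𝓕 : IndexedFamily} : PRTO 𝓕 → PRTTO 𝓕 := by
  rintro ⟨M, p, hl⟩
  refine ⟨M, idOTeacher, p, ?_⟩
  intro A hmem f hf
  obtain ⟨h, hFh, n, hset, ans₀, t, hout, htm, htlt⟩ := hl A hmem f hf
  classical
  set c : ∀ k, n + 1 < k → List Bool :=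
    fun k hk => Classical.choose (hset (k - 1) (by omega)) with hc
  refine ⟨h, hFh, histFun ans₀ n c, histFun_zero _ _ _, n, ?_, t, ?_, htlt⟩
  · intro M' hM'
    show M.Out A (str f M') h (histFun ans₀ n c (M' + 1))
    rcases eq_or_lt_of_le hM' with rfl | hlt
    · rw [histFun_self]
      exact hout
    · rw [histFun_gt _ _ _ (show n + 1 < M' + 1 by omega), hc]
      have := Classical.choose_spec (hset (M' + 1 - 1) (by omega))
      simpa using this
  · show t ∈ M.time (str f n, histFun ans₀ n c (n + 1))
    rw [histFun_self]
    exact htm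

/-- Promote a teacher to an oracle-teacher (ignoring the oracle answers). -/
def toOT (T : Teacher) : OTeacher where
  t := fun σ _ => T.t σ
  computable := T.computable.comp Computable.fst
  mono := fun _ _ _ _ hst _ => T.mono hst
  content_sub := fun _ _ _ hx => T.content_sub hx

lemma prtt_to_prtto {𝓕 : IndexedFamily} : PRTT 𝓕 → PRTTO 𝓕 := by
  rintro ⟨M, T, p, hl⟩
  refine ⟨toOM M, toOT T, pDouble p, ?_⟩
  intro A hmem f hf
  obtain ⟨h, hFh, n, hset, t, htm, htlt⟩ := hl A hmem f hf
  refine ⟨h, hFh, fun _ => [], rfl, n, ?_, 2 * t + ([] : List Bool).length + 1, ?_, ?_⟩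
  · intro M' hM'
    exact toOM_out (hset M' hM')
  · exact Part.mem_map _ htm
  · rw [pDouble_eval]
    simp only [List.length_nil]
    omega

end Transfers

section NotPRT

lemma not_prt_of_triple {𝓗 : IndexedFamily} (hF : ∀ n, 𝓗.F n = tripleSet n) : ¬ PRT 𝓗 := by
  rintro ⟨M, p, hl⟩
  have hmem0 : 𝓗.Mem {0} := ⟨0, by rw [hF]; ext x; simp [tripleSet]⟩
  have henum0 : IsEnum (fun _ => 0) {0} := by
    rw [IsEnum]
    ext x
    simp [eq_comm]
  obtain ⟨h₁, hFh₁, n, hset, t, ht, -⟩ := hl {0} hmem0 _ henum0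
  have hmem01 : 𝓗.Mem {0, 1} := by
    refine ⟨Nat.pair 0 (Nat.pair 1 1), ?_⟩
    rw [hF]
    unfold tripleSet
    rw [Nat.unpair_pair, Nat.unpair_pair]
    ext x
    simp
  set N := n + p.eval (𝓗.mi {0, 1}) + 1 with hN
  set g : ℕ → ℕ := fun i => if i < N then 0 else 1 with hg
  have henum01 : IsEnum g {0, 1} := by
    rw [IsEnum]
    ext x
    simp only [Set.mem_range, Set.mem_insert_iff, Set.mem_singleton_iff]
    constructor
    · rintro ⟨i, rfl⟩
      by_cases h : i < N <;> simp [hg, h]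
    · rintro (rfl | rfl)
      · exact ⟨0, by simp only [hg]; rw [if_pos (by omega)]⟩
      · exact ⟨N, by simp only [hg]; rw [if_neg (by omega)]⟩
  obtain ⟨h₂, hFh₂, n', hset', t', ht', htlt'⟩ := hl _ hmem01 g henum01
  have hlen : n' ≤ t' := by
    have := M.length_le_time ht'
    rwa [str_length] at this
  have hn' : n' < p.eval (𝓗.mi {0, 1}) := lt_of_le_of_lt hlen htlt'
  set m' := max n n' with hm'
  have hstr : str g m' = str (fun _ => 0) m' := by
    unfold str
    refine List.map_congr_left ?_
    intro i hi
    rw [List.mem_range] at hi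
    show (if i < N then 0 else 1) = 0
    rw [if_pos (by omega)]
  have e1 := hset m' (le_max_left _ _)
  have e2 := hset' m' (le_max_right _ _)
  rw [hstr, e1] at e2
  have heq : h₁ = h₂ := by
    have := Part.some_inj.1 e2
    exact this
  have hsets : ({0} : Set ℕ) = {0, 1} := by rw [← hFh₁, heq, hFh₂]
  have : (1 : ℕ) ∈ ({0} : Set ℕ) := by rw [hsets]; right; rfl
  simp at this

end NotPRT

/-- `PRT ⊊ PRT[O] ⊆ PRT[T,O]` and `PRT ⊊ PRT[T] ⊆ PRT[T,O]`;
in particular the family `𝓗₂` of all three-element multisets (under the fixed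
triple coding) is PRT[O]- and PRT[T]-learnable but not PRT-learnable. -/
theorem stmt1 :
    ((∀ 𝓕 : IndexedFamily, PRT 𝓕 → PRTO 𝓕) ∧ (∃ 𝓕 : IndexedFamily, PRTO 𝓕 ∧ ¬ PRT 𝓕) ∧
      (∀ 𝓕 : IndexedFamily, PRTO 𝓕 → PRTTO 𝓕)) ∧
    ((∀ 𝓕 : IndexedFamily, PRT 𝓕 → PRTT 𝓕) ∧ (∃ 𝓕 : IndexedFamily, PRTT 𝓕 ∧ ¬ PRT 𝓕) ∧
      (∀ 𝓕 : IndexedFamily, PRTT 𝓕 → PRTTO 𝓕)) ∧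
    (∀ 𝓗 : IndexedFamily, (∀ n, 𝓗.F n = tripleSet n) →
      PRTO 𝓗 ∧ PRTT 𝓗 ∧ ¬ PRT 𝓗) :=
  ⟨⟨fun _ => prt_to_prto, ⟨H2, prto_of_triple H2_F, not_prt_of_triple H2_F⟩,
      fun _ => prto_to_prtto⟩,
    ⟨fun _ => prt_to_prtt, ⟨H2, prtt_of_triple H2_F, not_prt_of_triple H2_F⟩,
      fun _ => prtt_to_prtto⟩,
    fun _ hF => ⟨prto_of_triple hF, prtt_of_triple hF, not_prt_of_triple hF⟩⟩

end TeachLearn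
end

section
/- There is an indexed family 𝓜𝓢𝓓 = {F_n}_{n∈ℕ} (the marked self-describing sets), in which each F_n is a descriptor on the 0th column describing n, that is PRT[T]-learnable but not PRT[O]-learnable. -/
/-!
Common framework: indexed families of c.e. sets, enumerations (texts),
learning machines with run-time, membership-oracle machines, teachers,
and the learning criteria PRT/PSD/PMC/PCS with oracle/teacher variants.
-/

namespace TeachLearn

attribute [local instance] Classical.propDecidable

/-- The computable bijection `ℕ → ℤ` with `signedInt (2n) = n` and
`signedInt (2n+1) = -(n+1)`. -/
def signedInt (n : ℕ) : ℤ := if n % 2 = 0 then (n / 2 : ℤ) else -((n / 2 : ℤ) + 1)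

/-- The fixed polynomial-time coding of quadruples. -/
def code4 (x c o i : ℕ) : ℕ := Nat.pair x (Nat.pair c (Nat.pair o i))

/-- `D` is a descriptor on the `i`-th column describing the natural number `n`:
`D = {⟨x, c x, 1, i⟩ : x ∈ X}` for a finite set `X` and completion indices `c`,
the completion indices sum to `0` (under `signedInt`), no nonempty proper
subset of them sums to `0`, and `Σ_{x ∈ X} signedInt x = n ≥ 0`. -/
def Describes (i : ℕ) (D : Set ℕ) (n : ℕ) : Prop :=
  ∃ (X : Finset ℕ) (c : ℕ → ℕ),
    D = {m | ∃ x ∈ X, m = code4 x (c x) 1 i} ∧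
    (∑ x ∈ X, signedInt (c x)) = 0 ∧
    (∀ X' ⊂ X, X'.Nonempty → (∑ x ∈ X', signedInt (c x)) ≠ 0) ∧
    0 ≤ (∑ x ∈ X, signedInt x) ∧
    (∑ x ∈ X, signedInt x) = (n : ℤ)

namespace MSD


def pw (e : ℕ) : ℕ := (List.range e).foldl (fun a _ => 2 * a) 1

lemma pw_eq (e : ℕ) : pw e = 2 ^ e := by
  induction e with
  | zero => rfl
  | succ n ih =>
      unfold pw at *
      rw [List.range_succ, List.foldl_append, ih]
      simp [pow_succ]; ring

def Texp (m : ℕ) : ℕ := pw (pw (2 * m + 2))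

lemma Texp_eq (m : ℕ) : Texp m = 2 ^ (2 ^ (2 * m + 2)) := by
  rw [Texp, pw_eq, pw_eq]

lemma Texp_ge (m : ℕ) : 4 * m + 4 ≤ Texp m := by
  rw [Texp_eq]
  have h1 : 2 * m + 2 < 2 ^ (2 * m + 2) := Nat.lt_two_pow_self
  have h2 : 2 ^ (2 * m + 2) ≤ 2 ^ (2 ^ (2 * m + 2)) :=
    Nat.pow_le_pow_right (by norm_num) (le_of_lt h1)
  have h3 : 4 * m + 4 ≤ 2 ^ (2 * m + 2) := by
    have hm : m + 1 ≤ 2^(2*m) :=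
      le_trans (Nat.succ_le_of_lt (Nat.lt_two_pow_self (n := m)))
        (Nat.pow_le_pow_right (by norm_num) (by omega))
    calc 4*m+4 = 4*(m+1) := by ring
    _ ≤ 4*2^(2*m) := by omega
    _ = 2^(2*m+2) := by rw [pow_add]; ring
  omega

lemma Texp_mono {a b : ℕ} (h : a ≤ b) : Texp a ≤ Texp b := by
  rw [Texp_eq, Texp_eq]
  exact Nat.pow_le_pow_right (by norm_num)
    (Nat.pow_le_pow_right (by norm_num) (by omega))

lemma Texp_quad (m : ℕ) : 4 * Texp m ≤ Texp (m + 1) := by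
  rw [Texp_eq, Texp_eq]
  have h1 : 2 ^ (2 * m + 2) + 2 ≤ 2 ^ (2 * (m + 1) + 2) := by
    have : 2 * m + 4 ≤ 2 * (m+1) + 2 := by omega
    have h2 : 2 ^ (2*m+2) * 4 = 2 ^ (2*m+4) := by
      rw [show 2*m+4 = (2*m+2)+1+1 by omega, pow_succ, pow_succ]; ring
    have h3 : (2:ℕ) ^ (2*m+4) ≤ 2 ^ (2*(m+1)+2) := Nat.pow_le_pow_right (by norm_num) this
    have h4 : 2 ^ (2*m+2) + 2 ≤ 2 ^ (2*m+2) * 4 := by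
      have : 1 ≤ 2 ^ (2*m+2) := Nat.one_le_two_pow
      omega
    omega
  calc 4 * 2 ^ 2 ^ (2*m+2) = 2 ^ (2 ^ (2*m+2) + 2) := by rw [pow_add]; ring
  _ ≤ 2 ^ 2 ^ (2*(m+1)+2) := Nat.pow_le_pow_right (by norm_num) h1

def blk (n : ℕ) : ℕ := (n + 1) / 2
def elem0 : ℕ := code4 0 0 1 0
def core (m : ℕ) : ℕ := code4 (2 * Texp m) 2 1 0
def clos (n : ℕ) : ℕ := code4 (2 * (Texp (blk n) - n) - 1) 1 1 0

lemma n_le_blk (n : ℕ) : n ≤ 2 * blk n := by unfold blk; omega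

lemma blk_ge {n : ℕ} (h : 1 ≤ n) : 1 ≤ blk n := by unfold blk; omega

lemma Texp_blk_ge (n : ℕ) : 2 * n + 4 ≤ Texp (blk n) := by
  have h1 := Texp_ge (blk n)
  have h2 := n_le_blk n
  omega

lemma clos_x_ge (n : ℕ) : Texp (blk n) ≤ 2 * (Texp (blk n) - n) - 1 := by
  have := Texp_blk_ge n; omega

lemma code4_inj {x c o i x' c' o' i' : ℕ} (h : code4 x c o i = code4 x' c' o' i') :
    x = x' ∧ c = c' ∧ o = o' ∧ i = i' := by
  unfold code4 at h
  rw [Nat.pair_eq_pair] at h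
  obtain ⟨h1, h2⟩ := h
  rw [Nat.pair_eq_pair] at h2
  obtain ⟨h2, h3⟩ := h2
  rw [Nat.pair_eq_pair] at h3
  exact ⟨h1, h2, h3.1, h3.2⟩

lemma clos_ge (n : ℕ) : Texp (blk n) ≤ clos n :=
  le_trans (clos_x_ge n) (Nat.left_le_pair _ _)

lemma clos_ge_self (n : ℕ) : n ≤ clos n := by
  have := clos_ge n; have := Texp_blk_ge n; omega

lemma core_ne_elem0 (m : ℕ) : core m ≠ elem0 := by
  intro h; exact absurd (code4_inj h).2.1 (by norm_num)

lemma clos_ne_elem0 (n : ℕ) : clos n ≠ elem0 := by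
  intro h; exact absurd (code4_inj h).2.1 (by norm_num)

lemma clos_ne_core (n m : ℕ) : clos n ≠ core m := by
  intro h; exact absurd (code4_inj h).2.1 (by norm_num)

lemma clos_inj {a b : ℕ} (h : clos a = clos b) : a = b := by
  have hx := (code4_inj h).1
  have ha := Texp_blk_ge a
  have hb := Texp_blk_ge b
  -- 2*(Ta - a) - 1 = 2*(Tb - b) - 1  →  Ta - a = Tb - b
  have hx' : Texp (blk a) - a = Texp (blk b) - b := by omega
  rcases lt_trichotomy (blk a) (blk b) with hlt | heq | hgt
  · -- blk a < blk b : contradiction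
    exfalso
    have h4 : 4 * Texp (blk a) ≤ Texp (blk a + 1) := Texp_quad _
    have h5 : Texp (blk a + 1) ≤ Texp (blk b) := Texp_mono (by omega)
    have h6 := n_le_blk b
    have h7 := Texp_ge (blk b)
    omega
  · rw [heq] at hx'; omega
  · exfalso
    have h4 : 4 * Texp (blk b) ≤ Texp (blk b + 1) := Texp_quad _
    have h5 : Texp (blk b + 1) ≤ Texp (blk a) := Texp_mono (by omega)
    have h6 := n_le_blk a
    have h7 := Texp_ge (blk a)
    omega

def Fam : ℕ → Set ℕ := fun n => if n = 0 then {elem0} else {core (blk n), clos n}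

lemma Fam_zero : Fam 0 = {elem0} := by simp [Fam]

lemma Fam_pos {n : ℕ} (h : n ≠ 0) : Fam n = {core (blk n), clos n} := by simp [Fam, h]

lemma Fam_inj {a b : ℕ} (h : Fam a = Fam b) : a = b := by
  by_cases ha : a = 0 <;> by_cases hb : b = 0
  · omega
  · exfalso
    rw [ha, Fam_zero, Fam_pos hb] at h
    have : clos b ∈ ({elem0} : Set ℕ) := by rw [h]; right; rfl
    exact clos_ne_elem0 b this
  · exfalso
    rw [hb, Fam_zero, Fam_pos ha] at h
    have : clos a ∈ ({elem0} : Set ℕ) := by rw [← h]; right; rfl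
    exact clos_ne_elem0 a this
  · rw [Fam_pos ha, Fam_pos hb] at h
    have : clos a ∈ ({core (blk b), clos b} : Set ℕ) := by rw [← h]; right; rfl
    rcases this with h' | h'
    · exact absurd h' (clos_ne_core a (blk b))
    · exact clos_inj h'


lemma signedInt_even (t : ℕ) : signedInt (2 * t) = (t : ℤ) := by
  unfold signedInt
  rw [if_pos (by omega)]
  omega

lemma signedInt_odd {x : ℕ} (hx : x % 2 = 1) : signedInt x = -((x / 2 : ℕ) + 1 : ℤ) := by
  unfold signedInt
  rw [if_neg (by omega)]
  omega

lemma signedInt_two : signedInt 2 = 1 := by simpa using signedInt_even 1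
lemma signedInt_one : signedInt 1 = -1 := by
  rw [signedInt_odd (by norm_num)]; norm_num
lemma signedInt_zero : signedInt 0 = 0 := by simpa using signedInt_even 0


lemma describes_Fam (n : ℕ) : Describes 0 (Fam n) n := by
  by_cases h0 : n = 0
  · subst h0
    refine ⟨{0}, fun _ => 0, ?_, ?_, ?_, ?_, ?_⟩
    · rw [Fam_zero]; ext y
      simp only [Set.mem_singleton_iff, Set.mem_setOf_eq, Finset.mem_singleton]
      constructor
      · rintro rfl; exact ⟨0, rfl, rfl⟩
      · rintro ⟨x, rfl, rfl⟩; rfl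
    · simp [signedInt_zero]
    · intro X' hX' hne
      exfalso
      rcases Finset.subset_singleton_iff.mp hX'.subset with h | h
      · exact hne.ne_empty h
      · exact hX'.ne h
    · simp [signedInt_zero]
    · simp [signedInt_zero]
  · have hT : 2 * n + 4 ≤ Texp (blk n) := Texp_blk_ge n
    set T := Texp (blk n) with hTdef
    set a := 2 * T with hadef
    set b := 2 * (T - n) - 1 with hbdef
    have hab : a ≠ b := by omega
    have hba : b ≠ a := by omega
    refine ⟨{a, b}, fun x => if x = a then 2 else 1, ?_, ?_, ?_, ?_, ?_⟩
    · rw [Fam_pos h0]; ext y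
      simp only [Set.mem_insert_iff, Set.mem_singleton_iff, Set.mem_setOf_eq]
      constructor
      · rintro (rfl | rfl)
        · exact ⟨a, Finset.mem_insert_self _ _, by simp [core, hTdef, hadef]⟩
        · refine ⟨b, by simp, ?_⟩
          rw [if_neg hba]
          simp [clos, hbdef, hTdef]
      · rintro ⟨x, hx, rfl⟩
        rcases Finset.mem_insert.mp hx with rfl | hx
        · left; simp [core, hTdef, hadef]
        · rw [Finset.mem_singleton] at hx; subst hx
          right; rw [if_neg hba]; simp [clos, hbdef, hTdef]
    · rw [Finset.sum_pair hab]
      simp only [eq_self_iff_true, if_true, hba, if_false, if_neg hba, ite_true]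
      norm_num
      rw [signedInt_two, signedInt_one]; ring
    · intro X' hX' hne
      have hsub := hX'.subset
      by_cases hha : a ∈ X' <;> by_cases hhb : b ∈ X'
      · exfalso
        exact hX'.ne (Finset.Subset.antisymm hsub (by
          intro x hx
          rcases Finset.mem_insert.mp hx with rfl | hx
          · exact hha
          · rw [Finset.mem_singleton] at hx; subst hx; exact hhb))
      · have : X' = {a} := by
          apply Finset.Subset.antisymm
          · intro x hx
            have := hsub hx
            rcases Finset.mem_insert.mp this with rfl | h
            · exact Finset.mem_singleton_self _
            · rw [Finset.mem_singleton] at h; subst h; exact absurd hx hhb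
          · intro x hx; rw [Finset.mem_singleton] at hx; subst hx; exact hha
        rw [this, Finset.sum_singleton]
        simp only [eq_self_iff_true, ite_true]
        norm_num
        rw [signedInt_two]; norm_num
      · have : X' = {b} := by
          apply Finset.Subset.antisymm
          · intro x hx
            have := hsub hx
            rcases Finset.mem_insert.mp this with rfl | h
            · exact absurd hx hha
            · exact h
          · intro x hx; rw [Finset.mem_singleton] at hx; subst hx; exact hhb
        rw [this, Finset.sum_singleton]
        simp only [if_neg hba]
        rw [signedInt_one]; norm_num
      · exfalso
        rcases hne with ⟨x, hx⟩
        have := hsub hx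
        rcases Finset.mem_insert.mp this with rfl | h
        · exact hha hx
        · rw [Finset.mem_singleton] at h; subst h; exact hhb hx
    · rw [Finset.sum_pair hab, hadef, signedInt_even,
        signedInt_odd (x := b) (by omega)]
      have : b / 2 = T - n - 1 := by omega
      rw [this]
      omega
    · rw [Finset.sum_pair hab, hadef, signedInt_even,
        signedInt_odd (x := b) (by omega)]
      have : b / 2 = T - n - 1 := by omega
      rw [this]
      omega

def ident (n : ℕ) : ℕ := if n = 0 then elem0 else clos n

def isGood (e : ℕ) : Bool :=
  decide (e = elem0) || (List.range (e+1)).foldl (fun b k => b || decide (clos k = e)) false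

lemma foldl_or_eq (p : ℕ → Bool) (l : List ℕ) (b : Bool) :
    l.foldl (fun b k => b || p k) b = (b || l.any p) := by
  induction l generalizing b with
  | nil => simp
  | cons a l ih => simp [ih, Bool.or_assoc]

lemma isGood_iff (e : ℕ) : isGood e = true ↔ e = elem0 ∨ ∃ k, k ≤ e ∧ clos k = e := by
  unfold isGood
  rw [foldl_or_eq]
  simp [List.any_eq_true, Nat.lt_succ_iff]

lemma isGood_clos (n : ℕ) : isGood (clos n) = true :=
  (isGood_iff _).mpr (Or.inr ⟨n, clos_ge_self n, rfl⟩)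

lemma isGood_elem0 : isGood elem0 = true := (isGood_iff _).mpr (Or.inl rfl)

lemma isGood_core (m : ℕ) : isGood (core m) = false := by
  rw [Bool.eq_false_iff]
  intro h
  rcases (isGood_iff _).mp h with h | ⟨k, _, h⟩
  · exact core_ne_elem0 m h
  · exact clos_ne_core k m h

lemma isGood_ident (n : ℕ) : isGood (ident n) = true := by
  unfold ident
  by_cases h : n = 0
  · rw [if_pos h]; exact isGood_elem0
  · rw [if_neg h]; exact isGood_clos n

lemma mem_ident (n : ℕ) : ident n ∈ Fam n := by
  unfold ident
  by_cases h : n = 0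
  · rw [if_pos h, h, Fam_zero]; rfl
  · rw [if_neg h, Fam_pos h]; right; rfl

lemma good_unique {n x : ℕ} (hx : x ∈ Fam n) (hg : isGood x = true) : x = ident n := by
  unfold ident
  by_cases h : n = 0
  · rw [if_pos h]; rw [h, Fam_zero] at hx; exact hx
  · rw [if_neg h]; rw [Fam_pos h] at hx
    rcases hx with rfl | rfl
    · rw [isGood_core] at hg; cases hg
    · rfl

def dec (e : ℕ) : ℕ :=
  if e = elem0 then 0 else (List.range (e+1)).foldl (fun a k => if clos k = e then k else a) 0

lemma foldl_dec_keep {e n : ℕ} (l : List ℕ) (h : ∀ k ∈ l, clos k = e → k = n) :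
    l.foldl (fun a k => if clos k = e then k else a) n = n := by
  induction l with
  | nil => rfl
  | cons a l ih =>
      simp only [List.foldl_cons]
      by_cases hc : clos a = e
      · rw [if_pos hc, h a (List.mem_cons_self) hc]
        exact ih fun k hk => h k (List.mem_cons_of_mem _ hk)
      · rw [if_neg hc]
        exact ih fun k hk => h k (List.mem_cons_of_mem _ hk)

lemma foldl_dec_find {e n : ℕ} (l : List ℕ) (hmem : n ∈ l) (hcl : clos n = e)
    (huniq : ∀ k ∈ l, clos k = e → k = n) (a : ℕ) :
    l.foldl (fun a k => if clos k = e then k else a) a = n := by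
  induction l generalizing a with
  | nil => cases hmem
  | cons x l ih =>
      simp only [List.foldl_cons]
      by_cases hc : clos x = e
      · have hx : x = n := huniq x (List.mem_cons_self) hc
        subst hx
        rw [if_pos hc]
        exact foldl_dec_keep l fun k hk => huniq k (List.mem_cons_of_mem _ hk)
      · rw [if_neg hc]
        have hm : n ∈ l := by
          rcases List.mem_cons.mp hmem with rfl | h
          · exact absurd hcl hc
          · exact h
        exact ih hm (fun k hk => huniq k (List.mem_cons_of_mem _ hk)) a

lemma dec_elem0 : dec elem0 = 0 := by rw [dec, if_pos rfl]

lemma dec_clos (n : ℕ) : dec (clos n) = n := by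
  rw [dec, if_neg (clos_ne_elem0 n)]
  refine foldl_dec_find _ ?_ rfl ?_ 0
  · exact List.mem_range.mpr (by have := clos_ge_self n; omega)
  · intro k _ hk; exact clos_inj hk

lemma dec_ident (n : ℕ) : dec (ident n) = n := by
  unfold ident
  by_cases h : n = 0
  · rw [if_pos h, dec_elem0, h]
  · rw [if_neg h, dec_clos]

def tstep : List ℕ → ℕ → List ℕ :=
  fun acc a => if acc = [] then (if isGood a then [a] else []) else acc

def tf (σ : List ℕ) : List ℕ := σ.foldl tstep []

lemma tf_keep (σ : List ℕ) {acc : List ℕ} (h : acc ≠ []) :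
    σ.foldl tstep acc = acc := by
  induction σ with
  | nil => rfl
  | cons a σ ih => rw [List.foldl_cons, tstep, if_neg h]; exact ih

lemma tf_prefix {σ τ : List ℕ} (h : σ <+: τ) : tf σ <+: tf τ := by
  rcases h with ⟨ρ, rfl⟩
  unfold tf
  rw [List.foldl_append]
  by_cases he : σ.foldl tstep [] = []
  · rw [he]; exact List.nil_prefix
  · rw [tf_keep ρ he]

lemma tf_cases (σ : List ℕ) :
    (tf σ = [] ∧ ∀ x ∈ σ, isGood x = false) ∨
    ∃ e, tf σ = [e] ∧ e ∈ σ ∧ isGood e = true := by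
  induction σ with
  | nil => left; exact ⟨rfl, by simp⟩
  | cons a σ ih =>
      have hcons : tf (a :: σ) = σ.foldl tstep (tstep [] a) := rfl
      by_cases hg : isGood a = true
      · right
        refine ⟨a, ?_, List.mem_cons_self, hg⟩
        rw [hcons, tstep, if_pos rfl, if_pos hg]
        exact tf_keep σ (by simp)
      · have hstep : tstep [] a = [] := by
          rw [tstep, if_pos rfl, if_neg hg]
        rw [hcons, hstep]
        rcases ih with ⟨h1, h2⟩ | ⟨e, h1, h2, h3⟩
        · left
          refine ⟨h1, ?_⟩
          intro x hx
          rcases List.mem_cons.mp hx with rfl | hx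
          · exact Bool.eq_false_iff.mpr hg
          · exact h2 x hx
        · right; exact ⟨e, h1, List.mem_cons_of_mem _ h2, h3⟩

lemma tf_content {σ : List ℕ} {x : ℕ} (h : x ∈ tf σ) : x ∈ σ := by
  rcases tf_cases σ with ⟨h1, _⟩ | ⟨e, h1, h2, _⟩
  · rw [h1] at h; cases h
  · rw [h1] at h
    rcases List.mem_singleton.mp h with rfl
    exact h2

lemma tf_spec {n : ℕ} {σ : List ℕ} (hsub : ∀ x ∈ σ, x ∈ Fam n)
    (hmem : ident n ∈ σ) : tf σ = [ident n] := by
  rcases tf_cases σ with ⟨h1, h2⟩ | ⟨e, h1, h2, h3⟩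
  · exact absurd (h2 _ hmem) (by rw [isGood_ident]; simp)
  · rw [h1, good_unique (hsub e h2) h3]

def mdec (σ : List ℕ) : ℕ := (σ.head?.map dec).getD 0

lemma mdec_nil : mdec [] = 0 := rfl
lemma mdec_cons (e : ℕ) (l : List ℕ) : mdec (e :: l) = dec e := rfl

section Computability

lemma primrec_pw : Primrec pw := by
  have h : Primrec fun e => (List.range e).foldl (fun a (_ : ℕ) => 2 * a) 1 := by
    have := Primrec.list_foldl (Primrec.list_range)
      (Primrec.const 1)
      (Primrec.to₂ (f := fun p : ℕ × (ℕ × ℕ) => 2 * p.2.1)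
        (Primrec₂.comp Primrec.nat_mul (Primrec.const 2)
          (Primrec.fst.comp Primrec.snd)))
    exact this
  exact h.of_eq fun e => rfl

lemma primrec_Texp : Primrec Texp := by
  have h2 : Primrec fun m => 2 * m + 2 :=
    Primrec₂.comp Primrec.nat_add
      (Primrec₂.comp Primrec.nat_mul (Primrec.const 2) Primrec.id)
      (Primrec.const 2)
  exact (primrec_pw.comp (primrec_pw.comp h2)).of_eq fun m => rfl

lemma primrec_blk : Primrec blk :=
  (Primrec₂.comp Primrec.nat_div (Primrec.succ) (Primrec.const 2)).of_eq fun n => rfl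

lemma primrec_clos : Primrec clos := by
  have hx : Primrec fun n => 2 * (Texp (blk n) - n) - 1 :=
    Primrec₂.comp Primrec.nat_sub
      (Primrec₂.comp Primrec.nat_mul (Primrec.const 2)
        (Primrec₂.comp Primrec.nat_sub (primrec_Texp.comp primrec_blk) Primrec.id))
      (Primrec.const 1)
  exact (Primrec₂.comp Primrec₂.natPair hx
    (Primrec.const (Nat.pair 1 (Nat.pair 1 0)))).of_eq fun n => rfl

lemma primrec_isGood : Primrec isGood := by
  have hb1 : Primrec fun e : ℕ => decide (e = elem0) :=
    Primrec₂.comp Primrec.eq.decide Primrec.id (Primrec.const elem0)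
  have hstep : Primrec fun p : ℕ × (Bool × ℕ) => (p.2.1 || decide (clos p.2.2 = p.1)) := by
    have hc : Primrec fun p : ℕ × (Bool × ℕ) => decide (clos p.2.2 = p.1) :=
      Primrec₂.comp Primrec.eq.decide (primrec_clos.comp (Primrec.snd.comp Primrec.snd)) Primrec.fst
    have := Primrec.cond (Primrec.fst.comp Primrec.snd) (Primrec.const true) hc
    exact this.of_eq fun p => by cases p.2.1 <;> simp
  have hb2 : Primrec fun e : ℕ =>
      (List.range (e+1)).foldl (fun b k => b || decide (clos k = e)) false := by
    have := Primrec.list_foldl (Primrec.list_range.comp Primrec.succ)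
      (Primrec.const false) (Primrec.to₂ hstep)
    exact this.of_eq fun e => rfl
  have : Primrec fun e => (decide (e = elem0) || (List.range (e+1)).foldl (fun b k => b || decide (clos k = e)) false) := by
    have := Primrec.cond hb1 (Primrec.const true) hb2
    exact this.of_eq fun e => by cases h : decide (e = elem0) <;> simp
  exact this.of_eq fun e => by
    unfold isGood
    by_cases h : e = elem0 <;> simp [h]

lemma primrec_dec : Primrec dec := by
  have hstep : Primrec fun p : ℕ × (ℕ × ℕ) => if clos p.2.2 = p.1 then p.2.2 else p.2.1 := by
    exact Primrec.ite
      (PrimrecRel.comp Primrec.eq (primrec_clos.comp (Primrec.snd.comp Primrec.snd)) Primrec.fst)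
      (Primrec.snd.comp Primrec.snd) (Primrec.fst.comp Primrec.snd)
  have hfold : Primrec fun e : ℕ =>
      (List.range (e+1)).foldl (fun a k => if clos k = e then k else a) 0 := by
    have := Primrec.list_foldl (Primrec.list_range.comp Primrec.succ)
      (Primrec.const 0) (Primrec.to₂ hstep)
    exact this.of_eq fun e => rfl
  have := Primrec.ite (c := fun e : ℕ => e = elem0)
    (PrimrecRel.comp Primrec.eq Primrec.id (Primrec.const elem0)) (Primrec.const 0) hfold
  exact this.of_eq fun e => by
    unfold dec
    by_cases h : e = elem0 <;> simp [h]

lemma primrec_tf : Primrec tf := by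
  have hstep : Primrec fun p : List ℕ × (List ℕ × ℕ) => tstep p.2.1 p.2.2 := by
    have hgood : Primrec fun p : List ℕ × (List ℕ × ℕ) => isGood p.2.2 :=
      primrec_isGood.comp (Primrec.snd.comp Primrec.snd)
    have hinner : Primrec fun p : List ℕ × (List ℕ × ℕ) =>
        (bif isGood p.2.2 then [p.2.2] else ([] : List ℕ)) := by
      exact Primrec.cond hgood
        ((Primrec.list_cons).comp (Primrec.snd.comp Primrec.snd) (Primrec.const []))
        (Primrec.const [])
    have := Primrec.ite
      (c := fun p : List ℕ × (List ℕ × ℕ) => p.2.1 = [])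
      (PrimrecRel.comp Primrec.eq (Primrec.fst.comp Primrec.snd) (Primrec.const []))
      hinner (Primrec.fst.comp Primrec.snd)
    exact this.of_eq fun p => by
      unfold tstep
      by_cases h : p.2.1 = [] <;> simp [h] <;> cases hg : isGood p.2.2 <;> simp
  have := Primrec.list_foldl (Primrec.id (α := List ℕ)) (Primrec.const ([] : List ℕ))
    (Primrec.to₂ hstep)
  exact this.of_eq fun σ => rfl

lemma computable_mdec : Computable mdec := by
  have : Primrec mdec := by
    have := Primrec.option_getD.comp
      (Primrec.option_map Primrec.list_head? (primrec_dec.comp Primrec.snd).to₂)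
      (Primrec.const 0)
    exact this.of_eq fun σ => rfl
  exact this.to_comp

lemma computable_tf : Computable tf := primrec_tf.to_comp

end Computability


def Tch : Teacher where
  t := tf
  computable := computable_tf
  mono := fun _ _ h => tf_prefix h
  content_sub := fun _ _ h => tf_content h

def Mch : Machine where
  eval := fun σ => Part.some (mdec σ)
  partrec := computable_mdec
  time := fun σ => Part.some (σ.length + Nat.size (mdec σ))
  time_dom := by intro σ; simp
  length_le_time := by
    intro σ t ht
    rw [Part.mem_some_iff] at ht; subst ht; omega
  size_le_time := by
    intro σ t h ht hh
    rw [Part.mem_some_iff] at ht hh; subst ht; subst hh; omega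
  time_mono := by
    intro σ τ s t hpre hs ht
    rw [Part.mem_some_iff] at hs ht
    subst hs; subst ht
    cases σ with
    | nil =>
        have := hpre.length_le
        simp only [mdec_nil, Nat.size_zero]
        omega
    | cons a l =>
        rcases hpre with ⟨ρ, rfl⟩
        simp only [List.cons_append, mdec_cons, List.length_cons, List.length_append]
        omega

lemma str_mem {f : ℕ → ℕ} {j s : ℕ} (h : j < s) : f j ∈ str f s :=
  List.mem_map.mpr ⟨j, List.mem_range.mpr h, rfl⟩

lemma str_subset {f : ℕ → ℕ} {A : Set ℕ} (hf : IsEnum f A) (s : ℕ) :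
    ∀ x ∈ str f s, x ∈ A := by
  intro x hx
  rcases List.mem_map.mp hx with ⟨j, _, rfl⟩
  rw [← hf]; exact Set.mem_range_self j

lemma primrec_core : Primrec core := by
  have hx : Primrec fun m => 2 * Texp m :=
    Primrec₂.comp Primrec.nat_mul (Primrec.const 2) primrec_Texp
  exact (Primrec₂.comp Primrec₂.natPair hx
    (Primrec.const (Nat.pair 2 (Nat.pair 1 0)))).of_eq fun m => rfl

lemma computable_famP : ComputablePred fun p : ℕ × ℕ => p.1 ∈ Fam p.2 := by
  rw [ComputablePred.computable_iff]
  refine ⟨fun p => if p.2 = 0 then decide (p.1 = elem0) else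
      (decide (p.1 = core (blk p.2)) || decide (p.1 = clos p.2)), ?_, ?_⟩
  · have h1 : Primrec fun p : ℕ × ℕ => decide (p.1 = elem0) :=
      Primrec₂.comp Primrec.eq.decide Primrec.fst (Primrec.const elem0)
    have h2 : Primrec fun p : ℕ × ℕ => decide (p.1 = core (blk p.2)) :=
      Primrec₂.comp Primrec.eq.decide Primrec.fst ((primrec_core.comp primrec_blk).comp Primrec.snd)
    have h3 : Primrec fun p : ℕ × ℕ => decide (p.1 = clos p.2) :=
      Primrec₂.comp Primrec.eq.decide Primrec.fst (primrec_clos.comp Primrec.snd)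
    have h4 : Primrec fun p : ℕ × ℕ =>
        (decide (p.1 = core (blk p.2)) || decide (p.1 = clos p.2)) := by
      have := Primrec.cond h2 (Primrec.const true) h3
      exact this.of_eq fun p => by cases h : decide (p.1 = core (blk p.2)) <;> simp [h]
    have := Primrec.ite (c := fun p : ℕ × ℕ => p.2 = 0)
      (PrimrecRel.comp Primrec.eq Primrec.snd (Primrec.const 0)) h1 h4
    exact this.to_comp
  · funext p
    obtain ⟨x, y⟩ := p
    by_cases h : y = 0
    · subst h
      simp only [if_pos rfl]
      apply propext
      show x ∈ Fam 0 ↔ _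
      rw [Fam_zero]
      simp [Set.mem_singleton_iff]
    · simp only [if_neg h]
      apply propext
      show x ∈ Fam y ↔ _
      rw [Fam_pos h]
      simp [Set.mem_insert_iff, Set.mem_singleton_iff]

def MSDfam : IndexedFamily where
  F := Fam
  nonempty := fun n => ⟨ident n, mem_ident n⟩
  uce := computable_famP.to_re

lemma mi_Fam (n : ℕ) : MSDfam.mi (Fam n) = n := by
  have hset : {m | MSDfam.F m = Fam n} = {n} := by
    ext h
    simp only [Set.mem_setOf_eq, Set.mem_singleton_iff]
    refine ⟨fun hh => Fam_inj hh, fun hh => ?_⟩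
    subst hh; rfl
  unfold IndexedFamily.mi
  rw [hset]
  have := Nat.sInf_mem (s := ({n} : Set ℕ)) ⟨n, rfl⟩
  exact this

lemma prtt_MSD : PRTT MSDfam := by
  refine ⟨Mch, Tch, Polynomial.X + Polynomial.C 3, ?_⟩
  intro A hmem f henum
  obtain ⟨n, rfl⟩ := hmem
  refine ⟨n, rfl, ?_⟩
  have henum' : IsEnum f (Fam n) := henum
  have hid : ident n ∈ Set.range f := by
    rw [henum']; exact mem_ident n
  obtain ⟨j, hj⟩ := hid
  have hteach : ∀ m, j + 1 ≤ m → Tch.t (str f m) = [ident n] := by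
    intro m hm
    exact tf_spec (str_subset henum' m) (hj ▸ str_mem (by omega))
  refine ⟨j + 1, ?_, ?_⟩
  · intro m hm
    show Mch.eval (Tch.t (str f m)) = Part.some n
    rw [hteach m hm]
    show Part.some (mdec [ident n]) = Part.some n
    rw [mdec_cons, dec_ident]
  · refine ⟨1 + Nat.size n, ?_, ?_⟩
    · show (1 + Nat.size n) ∈ Mch.time (Tch.t (str f (j+1)))
      rw [hteach (j+1) le_rfl]
      show (1 + Nat.size n) ∈ Part.some ([ident n].length + Nat.size (mdec [ident n]))
      rw [Part.mem_some_iff, mdec_cons, dec_ident]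
      simp
    · have hmi : MSDfam.mi (MSDfam.F n) = n := mi_Fam n
      rw [hmi]
      have hsize : Nat.size n ≤ n := Nat.size_le.mpr (Nat.lt_two_pow_self)
      simp only [Polynomial.eval_add, Polynomial.eval_X, Polynomial.eval_C]
      omega

section OracleLemmas

variable {M : OMachine} {A B : Set ℕ} {σ : List ℕ}

lemma reach_prefix {b : List Bool} (hb : M.Reach A σ b) :
    ∀ {a : List Bool}, M.Reach A σ a → a.length ≤ b.length → a <+: b := by
  induction hb with
  | nil =>
      intro a ha hl
      have : a = [] := List.eq_nil_of_length_eq_zero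
        (Nat.le_zero.mp (by simpa using hl))
      simp [this]
  | @query ans q hans hstep ih =>
      intro a ha hl
      by_cases hle : a.length ≤ ans.length
      · exact (ih ha hle).trans (List.prefix_append _ _)
      · cases ha with
        | nil => simp at hle
        | @query ans' q' hans' hstep' =>
            have hlen' : ans'.length = ans.length := by
              simp at hl hle; omega
            have : ans' = ans :=
              (ih hans' (le_of_eq hlen')).eq_of_length hlen'
            subst this
            have hqq : 2 * q' = 2 * q := Part.mem_unique hstep' hstep
            have : q' = q := by omega
            subst this
            exact List.prefix_refl _

lemma reach_ext {b : List Bool} (hb : M.Reach A σ b) :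
    ∀ {a : List Bool}, M.Reach A σ a → a <+: b → a ≠ b →
      ∃ q, (2 * q) ∈ M.step (σ, a) := by
  induction hb with
  | nil =>
      intro a ha hpre hne
      exact absurd (List.prefix_nil.mp hpre) hne
  | @query ans q hans hstep ih =>
      intro a ha hpre hne
      by_cases heq : a = ans
      · subst heq; exact ⟨q, hstep⟩
      · have hlen : a.length ≤ ans.length := by
          by_contra hgt
          push_neg at hgt
          have h1 := hpre.length_le
          simp only [List.length_append, List.length_singleton] at h1
          have : a.length = ans.length + 1 := by omega
          exact hne (hpre.eq_of_length (by simp [this]))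
        exact ih ha (reach_prefix hans ha hlen) heq

lemma out_unique_aux {x y : ℕ} {a b : List Bool}
    (h1 : M.Out A σ x a) (h2 : M.Out A σ y b) (hl : a.length ≤ b.length) : x = y := by
  have hpre : a <+: b := reach_prefix h2.1 h1.1 hl
  by_cases heq : a = b
  · subst heq
    have := Part.mem_unique h1.2 h2.2
    omega
  · obtain ⟨q, hq⟩ := reach_ext h2.1 h1.1 hpre heq
    have := Part.mem_unique h1.2 hq
    omega

lemma out_unique {x y : ℕ} {a b : List Bool}
    (h1 : M.Out A σ x a) (h2 : M.Out A σ y b) : x = y := by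
  rcases le_total a.length b.length with h | h
  · exact out_unique_aux h1 h2 h
  · exact (out_unique_aux h2 h1 h).symm

lemma reach_transfer {ansB : List Bool} {tB : ℕ} (htB : tB ∈ M.time (σ, ansB))
    (hq : ∀ q, Nat.size (2 * q) ≤ tB → (q ∈ A ↔ q ∈ B)) :
    ∀ {b : List Bool}, M.Reach B σ b → b <+: ansB → M.Reach A σ b := by
  intro b hb
  induction hb with
  | nil => intro _; exact .nil
  | @query ans q hans hstep ih =>
      intro hpre
      have hpre' : ans <+: ansB := (List.prefix_append _ _).trans hpre
      have hdom : (M.time (σ, ans)).Dom :=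
        (M.time_dom _).mpr (Part.dom_iff_mem.mpr ⟨_, hstep⟩)
      obtain ⟨t', ht'⟩ := Part.dom_iff_mem.mp hdom
      have hle : t' ≤ tB := M.time_mono (List.prefix_refl σ) hpre' ht' htB
      have hsz : Nat.size (2 * q) ≤ t' := M.size_le_time ht' hstep
      have hd : decide (q ∈ B) = decide (q ∈ A) :=
        decide_eq_decide.mpr (hq q (le_trans hsz hle)).symm
      rw [hd]
      exact OMachine.Reach.query (ih hpre') hstep

lemma out_transfer {ansB : List Bool} {tB hB : ℕ} (houtB : M.Out B σ hB ansB)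
    (htB : tB ∈ M.time (σ, ansB))
    (hq : ∀ q, Nat.size (2 * q) ≤ tB → (q ∈ A ↔ q ∈ B)) :
    M.Out A σ hB ansB :=
  ⟨reach_transfer htB hq houtB.1 (List.prefix_refl _), houtB.2⟩

end OracleLemmas

section Asymptotics

lemma poly_bound (p : Polynomial ℕ) : ∃ c d, ∀ x, p.eval x ≤ c * (x + 1) ^ d := by
  induction p using Polynomial.induction_on' with
  | add p q hp hq =>
      obtain ⟨c1, d1, h1⟩ := hp
      obtain ⟨c2, d2, h2⟩ := hq
      refine ⟨c1 + c2, d1 + d2, fun x => ?_⟩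
      rw [Polynomial.eval_add]
      have e1 : (x+1)^d1 ≤ (x+1)^(d1+d2) := Nat.pow_le_pow_right (by omega) (by omega)
      have e2 : (x+1)^d2 ≤ (x+1)^(d1+d2) := Nat.pow_le_pow_right (by omega) (by omega)
      calc p.eval x + q.eval x ≤ c1 * (x+1)^d1 + c2 * (x+1)^d2 :=
            Nat.add_le_add (h1 x) (h2 x)
      _ ≤ c1 * (x+1)^(d1+d2) + c2 * (x+1)^(d1+d2) :=
            Nat.add_le_add (Nat.mul_le_mul_left _ e1) (Nat.mul_le_mul_left _ e2)
      _ = (c1+c2) * (x+1)^(d1+d2) := by ring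
  | monomial n a =>
      refine ⟨a, n, fun x => ?_⟩
      rw [Polynomial.eval_monomial]
      exact Nat.mul_le_mul_left _ (Nat.pow_le_pow_left (by omega) n)

lemma sq_lt_two_pow {s : ℕ} (h : 6 ≤ s) : (s+1)*(s+1) < 2^s := by
  induction s with
  | zero => omega
  | succ k ih =>
      rcases Nat.lt_or_ge k 6 with hk | hk
      · have : k = 5 := by omega
        subst this; norm_num
      · have h1 := ih hk
        have h2 : (k+1+1)*(k+1+1) ≤ 2*((k+1)*(k+1)) := by nlinarith
        have h3 : (2:ℕ)^(k+1) = 2*2^k := by rw [pow_succ]; ring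
        omega

lemma size_le_sqrt {m : ℕ} (h : 49 ≤ m) : Nat.size m ≤ Nat.sqrt m := by
  apply Nat.size_le.mpr
  have h1 : m < (Nat.sqrt m + 1)*(Nat.sqrt m + 1) := by
    have := Nat.lt_succ_sqrt m
    simpa [Nat.succ_eq_add_one] using this
  have h2 : 6 ≤ Nat.sqrt m := Nat.le_sqrt.mpr (by omega)
  exact lt_trans h1 (sq_lt_two_pow h2)

lemma exists_block (c d : ℕ) : ∃ m, 1 ≤ m ∧ c * (2*m+1)^d < 2^m := by
  set b := Nat.size c + 2*d + 8 with hb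
  have hb8 : 8 ≤ b := by omega
  have hbb : 8*8 ≤ b*b := Nat.mul_le_mul hb8 hb8
  refine ⟨b*b, by omega, ?_⟩
  set m := b*b with hmdef
  have hm49 : 49 ≤ m := by omega
  have hsqrt : Nat.sqrt m = b := by
    rw [hmdef, show b*b = b^2 by ring, Nat.sqrt_eq']
  have hsize_m : Nat.size m ≤ b := by
    have := size_le_sqrt hm49
    omega
  have h2m : Nat.size (2*m+1) ≤ Nat.size m + 2 := by
    apply Nat.size_le.mpr
    have h0 := Nat.lt_size_self m
    have h4 : 2*m+1 < 4 * 2^(Nat.size m) := by omega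
    have h5 : (4:ℕ) * 2^(Nat.size m) = 2^(Nat.size m + 2) := by
      rw [pow_add]; ring
    omega
  have hpow1 : (2*m+1) ≤ 2^(Nat.size m + 2) := by
    have := Nat.lt_size_self (2*m+1)
    have h6 : (2:ℕ)^(Nat.size (2*m+1)) ≤ 2^(Nat.size m + 2) :=
      Nat.pow_le_pow_right (by omega) h2m
    omega
  have hpowd : (2*m+1)^d ≤ 2^((Nat.size m + 2)*d) := by
    calc (2*m+1)^d ≤ (2^(Nat.size m + 2))^d := Nat.pow_le_pow_left hpow1 d
    _ = 2^((Nat.size m+2)*d) := by rw [← pow_mul]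
  have hexp : Nat.size c + (Nat.size m + 2)*d ≤ m := by
    have hsc : Nat.size c ≤ b := by omega
    have hA : (b+2)*(2*d) ≤ (b+2)*b := Nat.mul_le_mul_left _ (by omega)
    have hB : (Nat.size m + 2)*d ≤ (b+2)*d := Nat.mul_le_mul (by omega) le_rfl
    have hC : (b+2)*(2*d) = 2*((b+2)*d) := by ring
    have hD : (b+2)*b = b*b + 2*b := by ring
    have hE : 4*b ≤ b*b := Nat.mul_le_mul_right b (by omega)
    omega
  by_cases hc : c = 0
  · subst hc; simp
  · have hcpow : c < 2^(Nat.size c) := Nat.lt_size_self c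
    have hXpos : 0 < (2*m+1)^d := Nat.pow_pos (by omega)
    calc c * (2*m+1)^d < 2^(Nat.size c) * (2*m+1)^d :=
          mul_lt_mul_of_pos_right hcpow hXpos
    _ ≤ 2^(Nat.size c) * 2^((Nat.size m + 2)*d) := Nat.mul_le_mul_left _ hpowd
    _ = 2^(Nat.size c + (Nat.size m + 2)*d) := by rw [← pow_add]
    _ ≤ 2^m := Nat.pow_le_pow_right (by omega) hexp

end Asymptotics

lemma str_length (f : ℕ → ℕ) (s : ℕ) : (str f s).length = s := by simp [str]

lemma not_prto_MSD : ¬ PRTO MSDfam := by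
  rintro ⟨M, p, hM⟩
  obtain ⟨c, d, hcd⟩ := poly_bound p
  obtain ⟨m, hm1, hPm⟩ := exists_block c d
  set P := c * (2*m+1)^d with hPdef
  set n1 := 2*m - 1 with hn1def
  set n2 := 2*m with hn2def
  have hn10 : n1 ≠ 0 := by omega
  have hn20 : n2 ≠ 0 := by omega
  have hblk1 : blk n1 = m := by rw [hn1def]; unfold blk; omega
  have hblk2 : blk n2 = m := by rw [hn2def]; unfold blk; omega
  have hne : n1 ≠ n2 := by omega
  have hbud1 : p.eval n1 ≤ P := by
    calc p.eval n1 ≤ c * (n1+1)^d := hcd n1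
    _ ≤ c * (2*m+1)^d := Nat.mul_le_mul_left _ (Nat.pow_le_pow_left (by omega) d)
  have hbud2 : p.eval n2 ≤ P := by
    calc p.eval n2 ≤ c * (n2+1)^d := hcd n2
    _ ≤ c * (2*m+1)^d := Nat.mul_le_mul_left _ (Nat.pow_le_pow_left (by omega) d)
  set Z := P + 1 with hZdef
  set f1 : ℕ → ℕ := (fun i => if i < Z then core m else clos n1) with hf1
  set f2 : ℕ → ℕ := (fun i => if i < Z then core m else clos n2) with hf2
  have henum : ∀ (n : ℕ) (f : ℕ → ℕ), n ≠ 0 → blk n = m →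
      f = (fun i => if i < Z then core m else clos n) → IsEnum f (Fam n) := by
    intro n f hn hbk hf
    subst hf
    unfold IsEnum
    rw [Fam_pos hn, hbk]
    ext y
    constructor
    · rintro ⟨i, rfl⟩
      by_cases hi : i < Z
      · left; simp [hi]
      · right; simp [hi]
    · rintro (rfl | rfl)
      · refine ⟨0, ?_⟩
        have h0 : (0:ℕ) < Z := by omega
        simp [h0]
      · exact ⟨Z, by simp⟩
  obtain ⟨h1, hF1, hPI1⟩ := hM (Fam n1) ⟨n1, rfl⟩ f1 (henum n1 f1 hn10 hblk1 hf1)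
  obtain ⟨h2, hF2, hPI2⟩ := hM (Fam n2) ⟨n2, rfl⟩ f2 (henum n2 f2 hn20 hblk2 hf2)
  have hh1 : h1 = n1 := Fam_inj hF1
  have hh2 : h2 = n2 := Fam_inj hF2
  subst hh1; subst hh2
  obtain ⟨s1, hset1, ans1, t1, hout1, htm1, hlt1⟩ := hPI1
  obtain ⟨s2, hset2, ans2, t2, hout2, htm2, hlt2⟩ := hPI2
  rw [mi_Fam] at hlt1 hlt2
  have ht1P : t1 < P := lt_of_lt_of_le hlt1 hbud1
  have ht2P : t2 < P := lt_of_lt_of_le hlt2 hbud2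
  have hs1 : s1 ≤ t1 := by
    have := M.length_le_time htm1
    simpa [str_length] using this
  have hs2 : s2 ≤ t2 := by
    have := M.length_le_time htm2
    simpa [str_length] using this
  have hiff : ∀ (t : ℕ), t < P → ∀ q, Nat.size (2*q) ≤ t → (q ∈ Fam n1 ↔ q ∈ Fam n2) := by
    intro t htP q hsz
    have hgen : ∀ n', n' ≠ 0 → blk n' = m → q ≠ clos n' := by
      intro n' hn' hbk habs
      subst habs
      have e1 : Nat.size (clos n') ≤ Nat.size (2 * clos n') := Nat.size_le_size (by omega)
      have e2 : Nat.size (Texp m) ≤ Nat.size (clos n') := by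
        have h := clos_ge n'
        rw [hbk] at h
        exact Nat.size_le_size h
      have e3 : Nat.size (Texp m) = 2^(2*m+2) + 1 := by
        rw [Texp_eq]; exact Nat.size_pow
      have e4 : (2:ℕ)^m ≤ 2^(2*m+2) := Nat.pow_le_pow_right (by omega) (by omega)
      omega
    rw [Fam_pos hn10, Fam_pos hn20, hblk1, hblk2]
    constructor
    · rintro (rfl | rfl)
      · exact Or.inl rfl
      · exact absurd rfl (hgen n1 hn10 hblk1)
    · rintro (rfl | rfl)
      · exact Or.inl rfl
      · exact absurd rfl (hgen n2 hn20 hblk2)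
  have hstr : ∀ s, s ≤ P → str f1 s = str f2 s := by
    intro s hsP
    unfold str
    apply List.map_congr_left
    intro i hi
    have hiZ : i < Z := by
      have := List.mem_range.mp hi
      omega
    rw [hf1, hf2]
    simp [hiZ]
  rcases le_total s1 s2 with hss | hss
  · obtain ⟨ansX, houtX⟩ := hset1 s2 hss
    have hstr2 : str f2 s2 = str f1 s2 := (hstr s2 (by omega)).symm
    rw [hstr2] at hout2 htm2
    have htrans : M.Out (Fam n1) (str f1 s2) n2 ans2 :=
      out_transfer hout2 htm2 (fun q hq => hiff t2 ht2P q hq)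
    exact hne (out_unique houtX htrans)
  · obtain ⟨ansY, houtY⟩ := hset2 s1 hss
    have hstr1 : str f1 s1 = str f2 s1 := hstr s1 (by omega)
    rw [hstr1] at hout1 htm1
    have htrans : M.Out (Fam n2) (str f2 s1) n1 ans1 :=
      out_transfer hout1 htm1 (fun q hq => (hiff t1 ht1P q hq).symm)
    exact hne (out_unique htrans houtY)

end MSD

/-- There is an indexed family (the marked self-describing
sets `𝓜𝓢𝓓`), whose `n`-th member is a descriptor on the `0`-th column
describing `n`, which is PRT[T]-learnable but not PRT[O]-learnable. -/
theorem stmt2 :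
    ∃ 𝓕 : IndexedFamily, (∀ n, Describes 0 (𝓕.F n) n) ∧ PRTT 𝓕 ∧ ¬ PRTO 𝓕 := by
  exact ⟨MSD.MSDfam, MSD.describes_Fam, MSD.prtt_MSD, MSD.not_prto_MSD⟩

end TeachLearn
end

section
/- Let 𝓕 = {F_n}_{n∈ℕ} be an indexed family and p a polynomial. If there are indices a and b_0, b_1, …, b_{p(a)−1} such that F_{b_0} ⊊ F_{b_1} ⊊ … ⊊ F_{b_{p(a)−1}} ⊊ F_a, then 𝓕 is not PRT[T]-learnable with polynomial bound p. -/
/-!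
Common framework: indexed families of c.e. sets, enumerations (texts),
learning machines with run-time, membership-oracle machines, teachers,
and the learning criteria PRT/PSD/PMC/PCS with oracle/teacher variants.
-/

namespace TeachLearn

attribute [local instance] Classical.propDecidable

lemma str_take (f : ℕ → ℕ) {m n : ℕ} (h : m ≤ n) : (str f n).take m = str f m := by
  simp [str, ← List.map_take, List.take_range, Nat.min_eq_left h]

/-- An infinite sequence extending the finite string `L` whose range is
`content L ∪ A` (which equals `A` when `content L ⊆ A` and `x₀ ∈ A`). -/
noncomputable def extSeq (L : List ℕ) (A : Set ℕ) (x₀ : ℕ) : ℕ → ℕ := fun n =>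
  if h : n < L.length then L[n] else if (n - L.length) ∈ A then n - L.length else x₀

lemma str_extSeq (L : List ℕ) (A : Set ℕ) (x₀ : ℕ) : str (extSeq L A x₀) L.length = L := by
  apply List.ext_getElem (by simp [str_length])
  intro i h1 h2
  simp [str, extSeq, h2]

lemma extSeq_mem {L : List ℕ} {A : Set ℕ} {x₀ : ℕ} (hx : x₀ ∈ A) (hL : ∀ x ∈ L, x ∈ A)
    (n : ℕ) : extSeq L A x₀ n ∈ A := by
  unfold extSeq
  split_ifs with h1 h2
  · exact hL _ (L.getElem_mem h1)
  · exact h2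
  · exact hx

lemma isEnum_extSeq {L : List ℕ} {A : Set ℕ} {x₀ : ℕ} (hx : x₀ ∈ A) (hL : ∀ x ∈ L, x ∈ A) :
    IsEnum (extSeq L A x₀) A := by
  apply Set.eq_of_subset_of_subset
  · rintro y ⟨n, rfl⟩; exact extSeq_mem hx hL n
  · intro y hy
    exact ⟨L.length + y, by simp [extSeq, hy]⟩

lemma prefix_take {L L' : List ℕ} (h : L <+: L') {n : ℕ} (hn : n ≤ L.length) :
    L'.take n = L.take n := by
  obtain ⟨r, rfl⟩ := h
  rw [List.take_append_of_le_length hn]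

lemma poly_mono (p : Polynomial ℕ) {x y : ℕ} (h : x ≤ y) : p.eval x ≤ p.eval y := by
  rw [Polynomial.eval_eq_sum_range, Polynomial.eval_eq_sum_range]
  exact Finset.sum_le_sum fun i _ => Nat.mul_le_mul_left _ (Nat.pow_le_pow_left h i)

/-- If `𝓕` contains a chain `F_{b 0} ⊊ F_{b 1} ⊊ ⋯ ⊊
F_{b (p(a)-1)} ⊊ F_a` of length `p(a)`, then `𝓕` is not PRT[T]-learnable with
polynomial bound `p`. -/
theorem stmt3 (𝓕 : IndexedFamily) (p : Polynomial ℕ) (a : ℕ) (b : ℕ → ℕ)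
    (hchain : ∀ i, i + 1 < p.eval a → 𝓕.F (b i) ⊂ 𝓕.F (b (i + 1)))
    (htop : ∀ i, i < p.eval a → 𝓕.F (b i) ⊂ 𝓕.F a) :
    ¬ ∃ (M : Machine) (T : Teacher), PRTTLearnsWith M T p 𝓕 := by
  rintro ⟨M, T, hMT⟩
  set k := p.eval a with hk
  -- monotonicity of the chain
  have hmono' : ∀ d i, i + d < k → 𝓕.F (b i) ⊆ 𝓕.F (b (i + d)) := by
    intro d
    induction d with
    | zero => intro i _; exact subset_rfl
    | succ d ih =>
      intro i hi
      have h1 : i + d + 1 < k := by omega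
      exact (ih i (by omega)).trans (hchain (i + d) h1).subset
  have hmono : ∀ i j, i ≤ j → j < k → 𝓕.F (b i) ⊆ 𝓕.F (b j) := by
    intro i j hij hj
    have := hmono' (j - i) i (by omega)
    rwa [Nat.add_sub_cancel' hij] at this
  -- main construction, by induction
  have main : ∀ i, i ≤ k → ∃ (L : List ℕ) (m h : ℕ → ℕ),
      (∀ x ∈ L, x ∈ 𝓕.F a) ∧
      (∀ x ∈ L, ∀ j, i ≤ j → j < k → x ∈ 𝓕.F (b j)) ∧
      (∀ j, j < i → m j ≤ L.length) ∧
      (∀ j j', j ≤ j' → j' < i → m j ≤ m j') ∧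
      (∀ j, j < i → 𝓕.F (h j) = 𝓕.F (b j) ∧
        M.eval (T.t (L.take (m j))) = Part.some (h j)) := by
    intro i
    induction i with
    | zero =>
      exact fun _ => ⟨[], fun _ => 0, fun _ => 0, by simp, by simp, by simp, by omega, by omega⟩
    | succ i ih =>
      intro hik
      obtain ⟨L, m, h, hLa, hLb, hmle, hmm, hev⟩ := ih (Nat.le_of_succ_le hik)
      have hik' : i < k := hik
      obtain ⟨x₀, hx₀⟩ := 𝓕.nonempty (b i)
      have hLbi : ∀ x ∈ L, x ∈ 𝓕.F (b i) := fun x hx => hLb x hx i le_rfl hik'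
      set g := extSeq L (𝓕.F (b i)) x₀ with hg
      have henum : IsEnum g (𝓕.F (b i)) := isEnum_extSeq hx₀ hLbi
      obtain ⟨hi, hFhi, n₀, hset, -⟩ := hMT _ ⟨b i, rfl⟩ g henum
      set mi := max n₀ L.length with hmi
      have hLpre : L <+: str g mi := by
        rw [← str_extSeq L (𝓕.F (b i)) x₀]
        exact str_prefix g (le_max_right _ _)
      have hLlen : (str g mi).length = mi := str_length g mi
      have hgmem : ∀ x ∈ str g mi, x ∈ 𝓕.F (b i) := by
        intro x hx
        obtain ⟨j, -, rfl⟩ := List.mem_map.mp hx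
        exact extSeq_mem hx₀ hLbi j
      refine ⟨str g mi, fun j => if j < i then m j else mi,
        fun j => if j < i then h j else hi, ?_, ?_, ?_, ?_, ?_⟩
      · exact fun x hx => (htop i hik').subset (hgmem x hx)
      · intro x hx j hij hj
        exact hmono i j (Nat.le_of_succ_le hij) hj (hgmem x hx)
      · intro j hj
        by_cases hji : j < i
        · simp only [if_pos hji, hLlen]
          exact (hmle j hji).trans (le_max_right _ _)
        · simp [if_neg hji, hLlen]
      · intro j j' hjj' hj'
        by_cases hji : j < i
        · by_cases hj'i : j' < i
          · simp only [if_pos hji, if_pos hj'i]; exact hmm j j' hjj' hj'i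
          · simp only [if_pos hji, if_neg hj'i]
            exact (hmle j hji).trans (le_max_right _ _)
        · have hj'i : ¬ j' < i := fun hc => hji (lt_of_le_of_lt hjj' hc)
          simp [if_neg hji, if_neg hj'i]
      · intro j hj
        by_cases hji : j < i
        · simp only [if_pos hji]
          refine ⟨(hev j hji).1, ?_⟩
          rw [prefix_take hLpre (hmle j hji)]
          exact (hev j hji).2
        · have hji' : j = i := by omega
          subst hji'
          simp only [if_neg hji]
          refine ⟨hFhi, ?_⟩
          rw [List.take_of_length_le (le_of_eq hLlen)]
          exact hset mi (le_max_left _ _)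
  -- extract the final construction
  obtain ⟨L, m, h, hLa, -, hmle, hmm, hev⟩ := main k le_rfl
  obtain ⟨y₀, hy₀⟩ := 𝓕.nonempty a
  set f := extSeq L (𝓕.F a) y₀ with hf
  have henum : IsEnum f (𝓕.F a) := isEnum_extSeq hy₀ hLa
  obtain ⟨hs, hFhs, n, hset, t, ht, htlt⟩ := hMT _ ⟨a, rfl⟩ f henum
  have hstrf : ∀ j, j < k → str f (m j) = L.take (m j) := by
    intro j hj
    have h1 := str_take f (n := L.length) (hmle j hj)
    rw [str_extSeq L (𝓕.F a) y₀] at h1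
    exact h1.symm
  have hevf : ∀ j, j < k → M.eval (T.t (str f (m j))) = Part.some (h j) := by
    intro j hj
    rw [hstrf j hj]
    exact (hev j hj).2
  -- the final settling stage is beyond all phase stages
  have hngt : ∀ j, j < k → m j < n := by
    intro j hj
    by_contra hle
    push_neg at hle
    have h1 := hset (m j) hle
    have h2 := hevf j hj
    rw [h1] at h2
    have h3 : hs = h j := Part.some_inj.mp h2
    have h4 : 𝓕.F a = 𝓕.F (b j) := by rw [← hFhs, h3, (hev j hj).1]
    exact (htop j hj).ne h4.symm
  -- the extended stage/hypothesis sequences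
  set m' : ℕ → ℕ := fun j => if j < k then m j else n with hm'
  set h' : ℕ → ℕ := fun j => if j < k then h j else hs with hh'
  have hevf' : ∀ j, j ≤ k → M.eval (T.t (str f (m' j))) = Part.some (h' j) := by
    intro j hj
    by_cases hjk : j < k
    · simp only [hm', hh', if_pos hjk]; exact hevf j hjk
    · simp only [hm', hh', if_neg hjk]; exact hset n le_rfl
  have hm'mono : ∀ j, j + 1 ≤ k → m' j ≤ m' (j + 1) := by
    intro j hj
    have hjk : j < k := hj
    by_cases hj1 : j + 1 < k
    · simp only [hm', if_pos hjk, if_pos hj1]; exact hmm j (j + 1) (by omega) hj1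
    · simp only [hm', if_pos hjk, if_neg hj1]; exact le_of_lt (hngt j hjk)
  have hh'ne : ∀ j, j + 1 ≤ k → h' j ≠ h' (j + 1) := by
    intro j hj heq
    have hjk : j < k := hj
    by_cases hj1 : j + 1 < k
    · simp only [hh', if_pos hjk, if_pos hj1] at heq
      have : 𝓕.F (b j) = 𝓕.F (b (j + 1)) := by
        rw [← (hev j hjk).1, ← (hev (j + 1) hj1).1, heq]
      exact (hchain j hj1).ne this
    · simp only [hh', if_pos hjk, if_neg hj1] at heq
      have : 𝓕.F (b j) = 𝓕.F a := by rw [← (hev j hjk).1, ← hFhs, heq]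
      exact (htop j hjk).ne this
  -- the teacher's outputs grow along the stage sequence
  have hlen : ∀ j, j ≤ k → j ≤ (T.t (str f (m' j))).length := by
    intro j
    induction j with
    | zero => simp
    | succ j ih =>
      intro hjk
      have hpre : T.t (str f (m' j)) <+: T.t (str f (m' (j + 1))) :=
        T.mono (str_prefix f (hm'mono j hjk))
      have hne : T.t (str f (m' j)) ≠ T.t (str f (m' (j + 1))) := by
        intro heq
        apply hh'ne j hjk
        have e1 := hevf' j (by omega)
        have e2 := hevf' (j + 1) hjk
        rw [heq, e2] at e1
        exact (Part.some_inj.mp e1).symm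
      have hlt : (T.t (str f (m' j))).length < (T.t (str f (m' (j + 1)))).length :=
        lt_of_le_of_ne hpre.length_le fun hl => hne (List.IsPrefix.eq_of_length hpre hl)
      have := ih (by omega)
      omega
  -- conclude
  have h1 : k ≤ (T.t (str f (m' k))).length := hlen k le_rfl
  have hm'k : m' k = n := if_neg (lt_irrefl k)
  rw [hm'k] at h1
  have h2 : (T.t (str f n)).length ≤ t := M.length_le_time ht
  have h3 : p.eval (𝓕.mi (𝓕.F a)) ≤ k := by
    apply poly_mono
    exact Nat.sInf_le (by exact rfl)
  omega

end TeachLearn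
end
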